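/- (Corollary 4, additivity under composition) Fix d ≥ 1 and an onsite symmetry (G, u), and let Ω be a flow (satisfying flow properties (1)–(4)). Let Λ be a finite metric space of sites and let U₁ and U₂ be G-symmetric strict LPUs on Λ, each with operator spreading length ξ. If (∂_{4ξ} A) ∩ (∂_{5ξ} B) = ∅, then Ω^Λ_{A,B}(U₁·U₂) = Ω^Λ_{A,B}(U₁) + Ω^Λ_{A,B}(U₂). -/

import Mathlib

open Matrix

/-- A matrix on the many-body space `ι = Λ → Fin d` is supported on `S ⊆ Λ` if its entries
vanish whenever the two configurations differ at a site outside `S`, and otherwise depend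
only on the restrictions of the configurations to `S`. -/
def SupportedOn {Λ : Type*} {d : ℕ} (S : Set Λ)
    (M : Matrix (Λ → Fin d) (Λ → Fin d) ℂ) : Prop :=
  (∀ x y, (∃ r ∉ S, x r ≠ y r) → M x y = 0) ∧
  (∀ x y x' y', (∀ r ∈ S, x r = x' r) → (∀ r ∈ S, y r = y' r) →
    (∀ r ∉ S, x r = y r) → (∀ r ∉ S, x' r = y' r) → M x y = M x' y')

/-- A matrix is unitary if `Mᴴ M = 1 = M Mᴴ`. -/
def IsUnitaryMat {ι : Type*} [Fintype ι] [DecidableEq ι] (M : Matrix ι ι ℂ) : Prop :=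
  Mᴴ * M = 1 ∧ M * Mᴴ = 1

/-- The global onsite symmetry operator `U_g`, with entries `∏_r u(g)_{x(r),y(r)}`. -/
def symOp {Λ : Type*} [Fintype Λ] {d : ℕ} {G : Type*}
    (u : G → Matrix (Fin d) (Fin d) ℂ) (g : G) :
    Matrix (Λ → Fin d) (Λ → Fin d) ℂ :=
  Matrix.of fun x y => ∏ r, u g (x r) (y r)

/-- A matrix is `G`-symmetric if it commutes with every global symmetry operator. -/
def IsGSymm {Λ : Type*} [Fintype Λ] [DecidableEq Λ] {d : ℕ} {G : Type*}
    (u : G → Matrix (Fin d) (Fin d) ℂ)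
    (M : Matrix (Λ → Fin d) (Λ → Fin d) ℂ) : Prop :=
  ∀ g, M * symOp u g = symOp u g * M

/-- The `ℓ`-thickened boundary `∂_ℓ S = {r : dist(r,S) ≤ ℓ and dist(r,Λ∖S) ≤ ℓ}`. -/
def thickBd {Λ : Type*} [MetricSpace Λ] (ℓ : ℝ) (S : Set Λ) : Set Λ :=
  {r | (∃ s ∈ S, dist r s ≤ ℓ) ∧ (∃ s ∈ Sᶜ, dist r s ≤ ℓ)}

/-- A strict locality-preserving unitary with operator spreading length `ξ`: conjugation
maps any operator supported on a single site `r` to one supported in the closed ball of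
radius `ξ` around `r`. -/
def IsStrictLPU {Λ : Type*} [Fintype Λ] [DecidableEq Λ] [MetricSpace Λ] {d : ℕ}
    (ξ : ℝ) (U : Matrix (Λ → Fin d) (Λ → Fin d) ℂ) : Prop :=
  IsUnitaryMat U ∧ ∀ (r : Λ) (O : Matrix (Λ → Fin d) (Λ → Fin d) ℂ),
    SupportedOn {r} O → SupportedOn (Metric.closedBall r ξ) (Uᴴ * O * U)

namespace FlowAux

variable {Λ : Type*} {d : ℕ}

theorem supportedOn_mono {S T : Set Λ} (hST : S ⊆ T)
    {M : Matrix (Λ → Fin d) (Λ → Fin d) ℂ} (h : SupportedOn S M) : SupportedOn T M := by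
  constructor
  · rintro x y ⟨r, hr, hne⟩
    exact h.1 x y ⟨r, fun hrS => hr (hST hrS), hne⟩
  · intro x y x' y' hxx hyy hxy hx'y'
    by_cases hc : ∀ r, r ∉ S → x r = y r
    · refine h.2 x y x' y' (fun r hr => hxx r (hST hr)) (fun r hr => hyy r (hST hr)) hc ?_
      intro r hr
      by_cases hT : r ∈ T
      · rw [← hxx r hT, ← hyy r hT]; exact hc r hr
      · exact hx'y' r hT
    · push_neg at hc
      obtain ⟨r, hrS, hne⟩ := hc
      have hrT : r ∈ T := by
        by_contra hT
        exact hne (hxy r hT)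
      rw [h.1 x y ⟨r, hrS, hne⟩, h.1 x' y' ⟨r, hrS, ?_⟩]
      rw [← hxx r hrT, ← hyy r hrT]
      exact hne

theorem supportedOn_one (S : Set Λ) [Fintype Λ] [DecidableEq Λ] :
    SupportedOn S (1 : Matrix (Λ → Fin d) (Λ → Fin d) ℂ) := by
  constructor
  · rintro x y ⟨r, hr, hne⟩
    rw [Matrix.one_apply]
    rw [if_neg]
    intro h; subst h; exact hne rfl
  · intro x y x' y' hxx hyy hxy hx'y'
    rw [Matrix.one_apply, Matrix.one_apply]
    have : x = y ↔ x' = y' := by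
      constructor
      · intro h; funext r
        by_cases hr : r ∈ S
        · rw [← hxx r hr, ← hyy r hr, h]
        · exact hx'y' r hr
      · intro h; funext r
        by_cases hr : r ∈ S
        · rw [hxx r hr, hyy r hr, h]
        · exact hxy r hr
    simp only [this]

theorem supportedOn_conjTranspose {S : Set Λ} [Fintype Λ] [DecidableEq Λ]
    {M : Matrix (Λ → Fin d) (Λ → Fin d) ℂ} (h : SupportedOn S M) : SupportedOn S Mᴴ := by
  constructor
  · rintro x y ⟨r, hr, hne⟩
    rw [Matrix.conjTranspose_apply, h.1 y x ⟨r, hr, fun he => hne he.symm⟩, star_zero]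
  · intro x y x' y' hxx hyy hxy hx'y'
    rw [Matrix.conjTranspose_apply, Matrix.conjTranspose_apply,
      h.2 y x y' x' hyy hxx (fun r hr => (hxy r hr).symm) (fun r hr => (hx'y' r hr).symm)]

theorem supportedOn_mul {S : Set Λ} [Fintype Λ] [DecidableEq Λ]
    {M N : Matrix (Λ → Fin d) (Λ → Fin d) ℂ}
    (hM : SupportedOn S M) (hN : SupportedOn S N) : SupportedOn S (M * N) := by
  classical
  constructor
  · rintro x y ⟨r, hrS, hne⟩
    rw [Matrix.mul_apply]
    apply Finset.sum_eq_zero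
    intro z _
    by_cases hz : z r = y r
    · rw [hM.1 x z ⟨r, hrS, by rw [hz]; exact hne⟩, zero_mul]
    · rw [hN.1 z y ⟨r, hrS, hz⟩, mul_zero]
  · intro x y x' y' hxx hyy hxy hx'y'
    rw [Matrix.mul_apply, Matrix.mul_apply]
    set sw : Λ → Fin d → Fin d := fun r v => if v = x r then x' r else if v = x' r then x r else v with hsw_def
    have hsw : ∀ r, Function.Involutive (sw r) := by
      intro r v
      simp only [hsw_def]
      split_ifs <;> simp_all
    set φ : (Λ → Fin d) → (Λ → Fin d) := fun z r => if r ∈ S then z r else sw r (z r) with hφ_def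
    have hφ : Function.Involutive φ := by
      intro z; funext r
      simp only [hφ_def]
      by_cases hr : r ∈ S
      · simp [hr]
      · simp only [if_neg hr]
        exact hsw r (z r)
    have key : ∀ z, M x z * N z y = M x' (φ z) * N (φ z) y' := by
      intro z
      by_cases hzx : ∀ r, r ∉ S → z r = x r
      · have hφz1 : ∀ r ∈ S, z r = φ z r := by intro r hr; simp [hφ_def, hr]
        have hφz2 : ∀ r, r ∉ S → φ z r = x' r := by
          intro r hr
          simp only [hφ_def, if_neg hr, hsw_def, hzx r hr]
          simp
        have e1 : M x z = M x' (φ z) :=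
          hM.2 x z x' (φ z) hxx hφz1 (fun r hr => (hzx r hr).symm)
            (fun r hr => (hφz2 r hr).symm)
        have e2 : N z y = N (φ z) y' :=
          hN.2 z y (φ z) y' hφz1 hyy (fun r hr => (hzx r hr).trans (hxy r hr))
            (fun r hr => (hφz2 r hr).trans (hx'y' r hr))
        rw [e1, e2]
      · push_neg at hzx
        obtain ⟨r, hrS, hne⟩ := hzx
        have h1 : M x z = 0 := hM.1 x z ⟨r, hrS, fun h => hne h.symm⟩
        have h2 : M x' (φ z) = 0 := by
          apply hM.1 x' (φ z)
          refine ⟨r, hrS, fun h => ?_⟩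
          simp only [hφ_def, if_neg hrS, hsw_def] at h
          by_cases hc1 : z r = x r
          · exact hne hc1
          · rw [if_neg hc1] at h
            by_cases hc2 : z r = x' r
            · rw [if_pos hc2] at h
              exact hne (hc2.trans h)
            · rw [if_neg hc2] at h
              exact hc2 h.symm
        rw [h1, h2, zero_mul, zero_mul]
    rw [Finset.sum_congr rfl (fun z _ => key z)]
    exact Equiv.sum_comp (hφ.toPerm φ) (fun w => M x' w * N w y')

theorem commute_of_disjoint {S T : Set Λ} [Fintype Λ] [DecidableEq Λ]
    (hdis : S ∩ T = ∅)
    {M N : Matrix (Λ → Fin d) (Λ → Fin d) ℂ}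
    (hM : SupportedOn S M) (hN : SupportedOn T N) : M * N = N * M := by
  classical
  have hST : ∀ r, r ∈ S → r ∉ T := by
    intro r hrS hrT
    exact absurd (Set.mem_inter hrS hrT) (by rw [hdis]; exact Set.notMem_empty r)
  ext x y
  rw [Matrix.mul_apply, Matrix.mul_apply]
  by_cases hagree : ∀ r, r ∉ S → r ∉ T → x r = y r
  · set z₀ : Λ → Fin d := fun r => if r ∈ S then y r else x r with hz₀
    set w₀ : Λ → Fin d := fun r => if r ∈ S then x r else y r with hw₀
    have hLHS : ∑ z, M x z * N z y = M x z₀ * N z₀ y := by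
      apply Finset.sum_eq_single_of_mem z₀ (Finset.mem_univ _)
      intro b _ hb
      have : ∃ r, b r ≠ z₀ r := by
        by_contra hc
        push_neg at hc
        exact hb (funext hc)
      obtain ⟨r, hr⟩ := this
      by_cases hrS : r ∈ S
      · have : z₀ r = y r := by simp [hz₀, hrS]
        rw [hN.1 b y ⟨r, hST r hrS, by rw [← this]; exact hr⟩, mul_zero]
      · have : z₀ r = x r := by simp [hz₀, hrS]
        rw [hM.1 x b ⟨r, hrS, fun h => hr (h.symm.trans this.symm)⟩, zero_mul]
    have hRHS : ∑ z, N x z * M z y = N x w₀ * M w₀ y := by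
      apply Finset.sum_eq_single_of_mem w₀ (Finset.mem_univ _)
      intro b _ hb
      have : ∃ r, b r ≠ w₀ r := by
        by_contra hc
        push_neg at hc
        exact hb (funext hc)
      obtain ⟨r, hr⟩ := this
      by_cases hrS : r ∈ S
      · have hw : w₀ r = x r := by simp [hw₀, hrS]
        rw [hN.1 x b ⟨r, hST r hrS, fun h => hr (h.symm.trans hw.symm)⟩, zero_mul]
      · have hw : w₀ r = y r := by simp [hw₀, hrS]
        rw [hM.1 b y ⟨r, hrS, by rw [← hw]; exact hr⟩, mul_zero]
    rw [hLHS, hRHS]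
    have e1 : M x z₀ = M w₀ y := by
      apply hM.2 x z₀ w₀ y
      · intro r hr; simp [hw₀, hr]
      · intro r hr; simp [hz₀, hr]
      · intro r hr; simp [hz₀, hr]
      · intro r hr; simp [hw₀, hr]
    have e2 : N z₀ y = N x w₀ := by
      apply hN.2 z₀ y x w₀
      · intro r hr
        have hrS : r ∉ S := fun hS => hST r hS hr
        simp [hz₀, hrS]
      · intro r hr
        have hrS : r ∉ S := fun hS => hST r hS hr
        simp [hw₀, hrS]
      · intro r hr
        by_cases hrS : r ∈ S
        · simp [hz₀, hrS]
        · simp [hz₀, hrS, hagree r hrS hr]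
      · intro r hr
        by_cases hrS : r ∈ S
        · simp [hw₀, hrS]
        · simp [hw₀, hrS, hagree r hrS hr]
    rw [e1, e2, mul_comm]
  · push_neg at hagree
    obtain ⟨r, hrS, hrT, hne⟩ := hagree
    rw [Finset.sum_eq_zero, Finset.sum_eq_zero]
    · intro z _
      by_cases hz : x r = z r
      · rw [hM.1 z y ⟨r, hrS, fun h => hne (hz.trans h)⟩, mul_zero]
      · rw [hN.1 x z ⟨r, hrT, hz⟩, zero_mul]
    · intro z _
      by_cases hz : x r = z r
      · rw [hN.1 z y ⟨r, hrT, fun h => hne (hz.trans h)⟩, mul_zero]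
      · rw [hM.1 x z ⟨r, hrS, hz⟩, zero_mul]

/-- Matrix unit at a single site. -/
noncomputable def siteUnit [Fintype Λ] [DecidableEq Λ] (r : Λ) (a b : Fin d) :
    Matrix (Λ → Fin d) (Λ → Fin d) ℂ :=
  Matrix.of fun x y => if x r = a ∧ y r = b ∧ ∀ s, s ≠ r → x s = y s then 1 else 0

theorem siteUnit_supported [Fintype Λ] [DecidableEq Λ] (r : Λ) (a b : Fin d) :
    SupportedOn ({r} : Set Λ) (siteUnit r a b) := by
  constructor
  · rintro x y ⟨s, hs, hne⟩
    have hsr : s ≠ r := by simpa using hs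
    rw [siteUnit, Matrix.of_apply, if_neg]
    rintro ⟨-, -, h⟩
    exact hne (h s hsr)
  · intro x y x' y' hxx hyy hxy hx'y'
    have hx : x r = x' r := hxx r rfl
    have hy : y r = y' r := hyy r rfl
    rw [siteUnit, Matrix.of_apply, Matrix.of_apply]
    have hcond : (x r = a ∧ y r = b ∧ ∀ s, s ≠ r → x s = y s) ↔
        (x' r = a ∧ y' r = b ∧ ∀ s, s ≠ r → x' s = y' s) := by
      constructor
      · rintro ⟨h1, h2, _⟩
        exact ⟨hx ▸ h1, hy ▸ h2, fun s hs => hx'y' s (by simpa using hs)⟩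
      · rintro ⟨h1, h2, _⟩
        exact ⟨hx.symm ▸ h1, hy.symm ▸ h2, fun s hs => hxy s (by simpa using hs)⟩
    simp only [hcond]

theorem supportedOn_of_commute [Fintype Λ] [DecidableEq Λ] {S : Set Λ}
    {M : Matrix (Λ → Fin d) (Λ → Fin d) ℂ}
    (H : ∀ r ∉ S, ∀ P : Matrix (Λ → Fin d) (Λ → Fin d) ℂ,
      SupportedOn ({r} : Set Λ) P → M * P = P * M) : SupportedOn S M := by
  classical
  have key : ∀ r ∉ S, ∀ (a b : Fin d) (x y : Λ → Fin d),
      (if y r = b then M x (Function.update y r a) else 0) =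
      (if x r = a then M (Function.update x r b) y else 0) := by
    intro r hr a b x y
    have hc := congrFun (congrFun (H r hr (siteUnit r a b) (siteUnit_supported r a b)) x) y
    have hL : (M * siteUnit r a b) x y = if y r = b then M x (Function.update y r a) else 0 := by
      rw [Matrix.mul_apply]
      have hterm : ∀ z, M x z * siteUnit r a b z y =
          if z = Function.update y r a ∧ y r = b then M x z else 0 := by
        intro z
        rw [siteUnit, Matrix.of_apply]
        by_cases h : z r = a ∧ y r = b ∧ ∀ s, s ≠ r → z s = y s
        · rw [if_pos h, mul_one, if_pos]
          refine ⟨funext fun s => ?_, h.2.1⟩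
          by_cases hs : s = r
          · subst hs; rw [Function.update_self, h.1]
          · rw [Function.update_of_ne hs, h.2.2 s hs]
        · rw [if_neg h, mul_zero, if_neg]
          rintro ⟨hz, hb⟩
          apply h
          subst hz
          exact ⟨Function.update_self r a y, hb, fun s hs => Function.update_of_ne hs a y⟩
      rw [Finset.sum_congr rfl (fun z _ => hterm z)]
      by_cases hb : y r = b
      · simp only [hb, and_true]
        rw [Finset.sum_ite_eq' Finset.univ (Function.update y r a) (fun z => M x z)]
        all_goals simp
      · simp only [hb, and_false, if_false, Finset.sum_const_zero]
    have hR : (siteUnit r a b * M) x y = if x r = a then M (Function.update x r b) y else 0 := by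
      rw [Matrix.mul_apply]
      have hterm : ∀ z, siteUnit r a b x z * M z y =
          if z = Function.update x r b ∧ x r = a then M z y else 0 := by
        intro z
        rw [siteUnit, Matrix.of_apply]
        by_cases h : x r = a ∧ z r = b ∧ ∀ s, s ≠ r → x s = z s
        · rw [if_pos h, one_mul, if_pos]
          refine ⟨funext fun s => ?_, h.1⟩
          by_cases hs : s = r
          · subst hs; rw [Function.update_self, h.2.1]
          · rw [Function.update_of_ne hs, ← h.2.2 s hs]
        · rw [if_neg h, zero_mul, if_neg]
          rintro ⟨hz, ha⟩
          apply h
          subst hz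
          exact ⟨ha, Function.update_self r b x, fun s hs => (Function.update_of_ne hs b x).symm⟩
      rw [Finset.sum_congr rfl (fun z _ => hterm z)]
      by_cases ha : x r = a
      · simp only [ha, and_true]
        rw [Finset.sum_ite_eq' Finset.univ (Function.update x r b) (fun z => M z y)]
        all_goals simp
      · simp only [ha, and_false, if_false, Finset.sum_const_zero]
    rw [← hL, ← hR, hc]
  have move1 : ∀ r ∉ S, ∀ (x y : Λ → Fin d) (a : Fin d),
      M x (Function.update y r a) = if x r = a then M (Function.update x r (y r)) y else 0 := by
    intro r hr x y a
    have := key r hr a (y r) x y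
    rwa [if_pos rfl] at this
  have vanish : ∀ r ∉ S, ∀ x y, x r ≠ y r → M x y = 0 := by
    intro r hr x y hne
    have := move1 r hr x y (y r)
    rw [Function.update_eq_self, if_neg hne] at this
    exact this
  have step : ∀ r ∉ S, ∀ (x y : Λ → Fin d) (c : Fin d), x r = y r →
      M x y = M (Function.update x r c) (Function.update y r c) := by
    intro r hr x y c hxy
    have := move1 r hr x (Function.update y r c) (x r)
    rw [Function.update_idem, hxy, Function.update_eq_self, if_pos rfl,
      Function.update_self] at this
    exact this
  constructor
  · rintro x y ⟨r, hr, hne⟩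
    exact vanish r hr x y hne
  · intro x y x' y' hxx hyy hxy hx'y'
    set nfun : (Λ → Fin d) → ℕ := fun x => (Finset.univ.filter (fun r => x r ≠ x' r)).card
      with hnfun
    have main : ∀ n (x y : Λ → Fin d), (∀ r ∈ S, x r = x' r) → (∀ r ∈ S, y r = y' r) →
        (∀ r ∉ S, x r = y r) → nfun x = n → M x y = M x' y' := by
      intro n
      induction n with
      | zero =>
        intro x y hxx hyy hxy hcard
        have hxeq : x = x' := by
          funext r
          by_contra hne
          have : r ∈ Finset.univ.filter (fun r => x r ≠ x' r) := by
            simp [hne]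
          rw [Finset.card_eq_zero.mp hcard] at this
          exact absurd this (Finset.notMem_empty r)
        have hyeq : y = y' := by
          funext r
          by_cases hrS : r ∈ S
          · exact hyy r hrS
          · rw [← hxy r hrS, ← hx'y' r hrS, hxeq]
        rw [hxeq, hyeq]
      | succ n ih =>
        intro x y hxx hyy hxy hcard
        have hne : ∃ r, r ∈ Finset.univ.filter (fun r => x r ≠ x' r) := by
          apply Finset.card_pos.mp
          show 0 < nfun x
          rw [hcard]; exact Nat.succ_pos n
        obtain ⟨r, hrmem⟩ := hne
        have hrne : x r ≠ x' r := by simpa using hrmem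
        have hrS : r ∉ S := fun h => hrne (hxx r h)
        set x₁ := Function.update x r (x' r) with hx₁
        set y₁ := Function.update y r (x' r) with hy₁
        have e0 : M x y = M x₁ y₁ := step r hrS x y (x' r) (hxy r hrS)
        rw [e0]
        apply ih x₁ y₁
        · intro s hs
          have : s ≠ r := fun h => hrS (h ▸ hs)
          rw [hx₁, Function.update_of_ne this]
          exact hxx s hs
        · intro s hs
          have : s ≠ r := fun h => hrS (h ▸ hs)
          rw [hy₁, Function.update_of_ne this]
          exact hyy s hs
        · intro s hs
          by_cases hsr : s = r
          · subst hsr; rw [hx₁, hy₁, Function.update_self, Function.update_self]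
          · rw [hx₁, hy₁, Function.update_of_ne hsr, Function.update_of_ne hsr]
            exact hxy s hs
        · have hfilter : Finset.univ.filter (fun s => x₁ s ≠ x' s) =
              (Finset.univ.filter (fun s => x s ≠ x' s)).erase r := by
            ext s
            simp only [Finset.mem_filter, Finset.mem_univ, true_and, Finset.mem_erase]
            by_cases hsr : s = r
            · subst hsr
              simp [hx₁, Function.update_self]
            · simp [hx₁, Function.update_of_ne hsr, hsr]
          show nfun x₁ = n
          have hxc : (Finset.univ.filter (fun r => x r ≠ x' r)).card = n + 1 := hcard
          show (Finset.univ.filter (fun s => x₁ s ≠ x' s)).card = n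
          rw [hfilter, Finset.card_erase_of_mem hrmem, hxc]
          omega
    exact main (nfun x) x y hxx hyy hxy rfl

section Unitary
variable {ι : Type*} [Fintype ι] [DecidableEq ι]

theorem unitary_one : IsUnitaryMat (1 : Matrix ι ι ℂ) := by
  constructor <;> simp

theorem unitary_mul {M N : Matrix ι ι ℂ} (hM : IsUnitaryMat M) (hN : IsUnitaryMat N) :
    IsUnitaryMat (M * N) := by
  constructor
  · rw [Matrix.conjTranspose_mul]
    calc Nᴴ * Mᴴ * (M * N) = Nᴴ * (Mᴴ * M) * N := by
          simp only [Matrix.mul_assoc]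
      _ = 1 := by rw [hM.1, Matrix.mul_one, hN.1]
  · rw [Matrix.conjTranspose_mul]
    calc M * N * (Nᴴ * Mᴴ) = M * (N * Nᴴ) * Mᴴ := by
          simp only [Matrix.mul_assoc]
      _ = 1 := by rw [hN.2, Matrix.mul_one, hM.2]

theorem unitary_conjT {M : Matrix ι ι ℂ} (hM : IsUnitaryMat M) : IsUnitaryMat Mᴴ := by
  refine ⟨?_, ?_⟩ <;> rw [Matrix.conjTranspose_conjTranspose]
  · exact hM.2
  · exact hM.1

theorem conj_mul {U : Matrix ι ι ℂ} (hU : IsUnitaryMat U) (X Y : Matrix ι ι ℂ) :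
    (U * X * Uᴴ) * (U * Y * Uᴴ) = U * (X * Y) * Uᴴ := by
  have c : ∀ Z : Matrix ι ι ℂ, Uᴴ * (U * Z) = Z := fun Z => by
    rw [← Matrix.mul_assoc, hU.1, Matrix.one_mul]
  simp only [Matrix.mul_assoc]
  rw [c]

theorem conj_mul' {U : Matrix ι ι ℂ} (hU : IsUnitaryMat U) (X Y : Matrix ι ι ℂ) :
    (Uᴴ * X * U) * (Uᴴ * Y * U) = Uᴴ * (X * Y) * U := by
  have c : ∀ Z : Matrix ι ι ℂ, U * (Uᴴ * Z) = Z := fun Z => by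
    rw [← Matrix.mul_assoc, hU.2, Matrix.one_mul]
  simp only [Matrix.mul_assoc]
  rw [c]

theorem conj_inv {U : Matrix ι ι ℂ} (hU : IsUnitaryMat U) (P : Matrix ι ι ℂ) :
    Uᴴ * (U * P * Uᴴ) * U = P := by
  simp only [Matrix.mul_assoc]
  rw [hU.1, Matrix.mul_one, ← Matrix.mul_assoc, hU.1, Matrix.one_mul]

theorem conj_inv' {U : Matrix ι ι ℂ} (hU : IsUnitaryMat U) (P : Matrix ι ι ℂ) :
    U * (Uᴴ * P * U) * Uᴴ = P := by
  simp only [Matrix.mul_assoc]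
  rw [hU.2, Matrix.mul_one, ← Matrix.mul_assoc, hU.2, Matrix.one_mul]

theorem unitary_conj {U M : Matrix ι ι ℂ} (hU : IsUnitaryMat U) (hM : IsUnitaryMat M) :
    IsUnitaryMat (U * M * Uᴴ) := by
  have h1 := unitary_mul (unitary_mul hU hM) (unitary_conjT hU)
  exact h1

end Unitary

theorem supportedOn_conj [Fintype Λ] [DecidableEq Λ] {T T' : Set Λ}
    {U O : Matrix (Λ → Fin d) (Λ → Fin d) ℂ} (hU : IsUnitaryMat U) (hO : SupportedOn T O)
    (hloc : ∀ r ∉ T', ∀ P : Matrix (Λ → Fin d) (Λ → Fin d) ℂ, SupportedOn ({r} : Set Λ) P →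
      ∃ N : Set Λ, N ∩ T = ∅ ∧ SupportedOn N (U * P * Uᴴ)) :
    SupportedOn T' (Uᴴ * O * U) := by
  apply supportedOn_of_commute
  intro r hr P hP
  obtain ⟨N, hNT, hUP⟩ := hloc r hr P hP
  have hcomm : O * (U * P * Uᴴ) = (U * P * Uᴴ) * O :=
    commute_of_disjoint (by rw [Set.inter_comm]; exact hNT) hO hUP
  calc Uᴴ * O * U * P = (Uᴴ * O * U) * (Uᴴ * (U * P * Uᴴ) * U) := by rw [conj_inv hU]
    _ = Uᴴ * (O * (U * P * Uᴴ)) * U := conj_mul' hU _ _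
    _ = Uᴴ * ((U * P * Uᴴ) * O) * U := by rw [hcomm]
    _ = (Uᴴ * (U * P * Uᴴ) * U) * (Uᴴ * O * U) := (conj_mul' hU _ _).symm
    _ = P * (Uᴴ * O * U) := by rw [conj_inv hU]

theorem supportedOn_conj' [Fintype Λ] [DecidableEq Λ] {T T' : Set Λ}
    {U O : Matrix (Λ → Fin d) (Λ → Fin d) ℂ} (hU : IsUnitaryMat U) (hO : SupportedOn T O)
    (hloc : ∀ r ∉ T', ∀ P : Matrix (Λ → Fin d) (Λ → Fin d) ℂ, SupportedOn ({r} : Set Λ) P →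
      ∃ N : Set Λ, N ∩ T = ∅ ∧ SupportedOn N (Uᴴ * P * U)) :
    SupportedOn T' (U * O * Uᴴ) := by
  have h : SupportedOn T' (Uᴴᴴ * O * Uᴴ) := by
    apply supportedOn_conj (U := Uᴴ) (unitary_conjT hU) hO
    intro r hr P hP
    obtain ⟨N, hNT, hUP⟩ := hloc r hr P hP
    refine ⟨N, hNT, ?_⟩
    rwa [Matrix.conjTranspose_conjTranspose]
  rwa [Matrix.conjTranspose_conjTranspose] at h

section Metric
variable [MetricSpace Λ]

/-- `grow t T` is the closed `t`-neighborhood of `T`. -/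
def grow (t : ℝ) (T : Set Λ) : Set Λ := {x | ∃ s ∈ T, dist x s ≤ t}

theorem subset_grow {t : ℝ} (ht : 0 ≤ t) (T : Set Λ) : T ⊆ grow t T :=
  fun x hx => ⟨x, hx, by simp [ht]⟩

theorem grow_mono {t : ℝ} {T T' : Set Λ} (h : T ⊆ T') : grow t T ⊆ grow t T' := by
  rintro x ⟨s, hs, hd⟩
  exact ⟨s, h hs, hd⟩

variable [Fintype Λ] [DecidableEq Λ]

theorem lpu_conj_site {ξ : ℝ} {U : Matrix (Λ → Fin d) (Λ → Fin d) ℂ}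
    (hU : IsStrictLPU ξ U) (r : Λ) {P : Matrix (Λ → Fin d) (Λ → Fin d) ℂ}
    (hP : SupportedOn ({r} : Set Λ) P) :
    SupportedOn (Metric.closedBall r ξ) (U * P * Uᴴ) := by
  apply supportedOn_of_commute
  intro s hs Q hQ
  have hQ' := hU.2 s Q hQ
  have hdisj : ({r} : Set Λ) ∩ Metric.closedBall s ξ = ∅ := by
    ext t
    simp only [Set.mem_inter_iff, Set.mem_singleton_iff, Metric.mem_closedBall,
      Set.mem_empty_iff_false, iff_false, not_and]
    rintro rfl hd
    exact hs (by rw [Metric.mem_closedBall, dist_comm]; exact hd)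
  have hcomm : P * (Uᴴ * Q * U) = (Uᴴ * Q * U) * P :=
    commute_of_disjoint hdisj hP hQ'
  calc U * P * Uᴴ * Q = (U * P * Uᴴ) * (U * (Uᴴ * Q * U) * Uᴴ) := by rw [conj_inv' hU.1]
    _ = U * (P * (Uᴴ * Q * U)) * Uᴴ := conj_mul hU.1 _ _
    _ = U * ((Uᴴ * Q * U) * P) * Uᴴ := by rw [hcomm]
    _ = (U * (Uᴴ * Q * U) * Uᴴ) * (U * P * Uᴴ) := (conj_mul hU.1 _ _).symm
    _ = Q * (U * P * Uᴴ) := by rw [conj_inv' hU.1]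

theorem lpu_conj_set {ξ : ℝ} {U : Matrix (Λ → Fin d) (Λ → Fin d) ℂ}
    (hU : IsStrictLPU ξ U) {T : Set Λ} {O : Matrix (Λ → Fin d) (Λ → Fin d) ℂ}
    (hO : SupportedOn T O) : SupportedOn (grow ξ T) (Uᴴ * O * U) := by
  apply supportedOn_conj hU.1 hO
  intro r hr P hP
  refine ⟨Metric.closedBall r ξ, ?_, lpu_conj_site hU r hP⟩
  ext s
  simp only [Set.mem_inter_iff, Metric.mem_closedBall, Set.mem_empty_iff_false, iff_false,
    not_and]
  intro hd hsT
  exact hr ⟨s, hsT, by rw [dist_comm]; exact hd⟩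

theorem lpu_conj_set' {ξ : ℝ} {U : Matrix (Λ → Fin d) (Λ → Fin d) ℂ}
    (hU : IsStrictLPU ξ U) {T : Set Λ} {O : Matrix (Λ → Fin d) (Λ → Fin d) ℂ}
    (hO : SupportedOn T O) : SupportedOn (grow ξ T) (U * O * Uᴴ) := by
  apply supportedOn_conj' hU.1 hO
  intro r hr P hP
  refine ⟨Metric.closedBall r ξ, ?_, hU.2 r P hP⟩
  ext s
  simp only [Set.mem_inter_iff, Metric.mem_closedBall, Set.mem_empty_iff_false, iff_false,
    not_and]
  intro hd hsT
  exact hr ⟨s, hsT, by rw [dist_comm]; exact hd⟩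

end Metric

section GSymm
variable {G : Type*} [Group G] {u : G → Matrix (Fin d) (Fin d) ℂ}
variable [Fintype Λ] [DecidableEq Λ]

theorem isGSymm_one : IsGSymm u (1 : Matrix (Λ → Fin d) (Λ → Fin d) ℂ) := fun g => by
  rw [Matrix.one_mul, Matrix.mul_one]

theorem isGSymm_mul {M N : Matrix (Λ → Fin d) (Λ → Fin d) ℂ}
    (hM : IsGSymm u M) (hN : IsGSymm u N) : IsGSymm u (M * N) := fun g => by
  rw [Matrix.mul_assoc, hN g, ← Matrix.mul_assoc, hM g, Matrix.mul_assoc]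

theorem u_one (hu_unit : ∀ g, IsUnitaryMat (u g)) (hu_mul : ∀ g h, u (g * h) = u g * u h) :
    u (1 : G) = 1 := by
  have h : u (1 : G) = u 1 * u 1 := by rw [← hu_mul]; norm_num
  have h2 := (hu_unit 1).1
  calc u (1 : G) = 1 * u 1 := (Matrix.one_mul _).symm
    _ = ((u 1)ᴴ * u 1) * u 1 := by rw [h2]
    _ = (u 1)ᴴ * (u 1 * u 1) := by rw [Matrix.mul_assoc]
    _ = (u 1)ᴴ * u 1 := by rw [← h]
    _ = 1 := h2

theorem u_inv (hu_unit : ∀ g, IsUnitaryMat (u g)) (hu_mul : ∀ g h, u (g * h) = u g * u h)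
    (g : G) : u g⁻¹ = (u g)ᴴ := by
  calc u g⁻¹ = u g⁻¹ * (u g * (u g)ᴴ) := by rw [(hu_unit g).2, Matrix.mul_one]
    _ = (u g⁻¹ * u g) * (u g)ᴴ := by rw [Matrix.mul_assoc]
    _ = u (g⁻¹ * g) * (u g)ᴴ := by rw [hu_mul]
    _ = (u g)ᴴ := by rw [inv_mul_cancel, u_one hu_unit hu_mul, Matrix.one_mul]

theorem symOp_conjT (hu_unit : ∀ g, IsUnitaryMat (u g))
    (hu_mul : ∀ g h, u (g * h) = u g * u h) (g : G) :
    (symOp u g : Matrix (Λ → Fin d) (Λ → Fin d) ℂ)ᴴ = symOp u g⁻¹ := by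
  ext x y
  rw [Matrix.conjTranspose_apply, symOp, symOp, Matrix.of_apply, Matrix.of_apply]
  rw [star_prod]
  apply Finset.prod_congr rfl
  intro r _
  rw [u_inv hu_unit hu_mul, Matrix.conjTranspose_apply]

theorem isGSymm_conjT (hu_unit : ∀ g, IsUnitaryMat (u g))
    (hu_mul : ∀ g h, u (g * h) = u g * u h)
    {M : Matrix (Λ → Fin d) (Λ → Fin d) ℂ} (hM : IsGSymm u M) : IsGSymm u Mᴴ := by
  intro g
  have h := congrArg Matrix.conjTranspose (hM g⁻¹)
  rw [Matrix.conjTranspose_mul, Matrix.conjTranspose_mul, symOp_conjT hu_unit hu_mul,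
    inv_inv] at h
  exact h.symm

end GSymm

section Double
variable [Fintype Λ] [DecidableEq Λ]

/-- Kronecker product on the doubled lattice. -/
def bx (M N : Matrix (Λ → Fin d) (Λ → Fin d) ℂ) :
    Matrix ((Λ ⊕ Λ) → Fin d) ((Λ ⊕ Λ) → Fin d) ℂ :=
  Matrix.reindex (Equiv.sumArrowEquivProdArrow Λ Λ (Fin d)).symm
    (Equiv.sumArrowEquivProdArrow Λ Λ (Fin d)).symm
    (Matrix.kroneckerMap (· * ·) M N)

theorem bx_apply (M N : Matrix (Λ → Fin d) (Λ → Fin d) ℂ) (x y : (Λ ⊕ Λ) → Fin d) :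
    bx M N x y = M (x ∘ Sum.inl) (y ∘ Sum.inl) * N (x ∘ Sum.inr) (y ∘ Sum.inr) := rfl

theorem bx_mul (M N M' N' : Matrix (Λ → Fin d) (Λ → Fin d) ℂ) :
    bx M N * bx M' N' = bx (M * M') (N * N') := by
  ext x y
  rw [Matrix.mul_apply, bx_apply, Matrix.mul_apply, Matrix.mul_apply]
  rw [Finset.sum_mul_sum]
  rw [← Equiv.sum_comp (Equiv.sumArrowEquivProdArrow Λ Λ (Fin d)).symm
    (fun z => bx M N x z * bx M' N' z y)]
  rw [Fintype.sum_prod_type]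
  apply Finset.sum_congr rfl
  intro a _
  apply Finset.sum_congr rfl
  intro b _
  rw [bx_apply, bx_apply]
  have h1 : (Equiv.sumArrowEquivProdArrow Λ Λ (Fin d)).symm (a, b) ∘ Sum.inl = a := rfl
  have h2 : (Equiv.sumArrowEquivProdArrow Λ Λ (Fin d)).symm (a, b) ∘ Sum.inr = b := rfl
  rw [h1, h2]
  ring

theorem bx_one : bx (1 : Matrix (Λ → Fin d) (Λ → Fin d) ℂ) 1 = 1 := by
  ext x y
  rw [bx_apply, Matrix.one_apply, Matrix.one_apply, Matrix.one_apply]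
  by_cases h : x = y
  · subst h
    simp
  · have : ¬(x ∘ Sum.inl = y ∘ Sum.inl) ∨ ¬(x ∘ Sum.inr = y ∘ Sum.inr) := by
      by_contra hc
      push_neg at hc
      apply h
      funext z
      cases z with
      | inl a => exact congrFun hc.1 a
      | inr b => exact congrFun hc.2 b
    rw [if_neg h]
    rcases this with h' | h'
    · rw [if_neg h', zero_mul]
    · rw [if_neg h', mul_zero]

theorem bx_conjT (M N : Matrix (Λ → Fin d) (Λ → Fin d) ℂ) : (bx M N)ᴴ = bx Mᴴ Nᴴ := by
  ext x y
  rw [Matrix.conjTranspose_apply, bx_apply, bx_apply, Matrix.conjTranspose_apply,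
    Matrix.conjTranspose_apply, star_mul']

theorem unitary_bx {M N : Matrix (Λ → Fin d) (Λ → Fin d) ℂ}
    (hM : IsUnitaryMat M) (hN : IsUnitaryMat N) : IsUnitaryMat (bx M N) := by
  constructor
  · rw [bx_conjT, bx_mul, hM.1, hN.1, bx_one]
  · rw [bx_conjT, bx_mul, hM.2, hN.2, bx_one]

theorem symOp_double {G : Type*} (u : G → Matrix (Fin d) (Fin d) ℂ) (g : G) :
    (symOp u g : Matrix ((Λ ⊕ Λ) → Fin d) ((Λ ⊕ Λ) → Fin d) ℂ) =
      bx (symOp u g) (symOp u g) := by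
  ext x y
  simp only [bx_apply, symOp, Matrix.of_apply]
  exact Fintype.prod_sum_type _

theorem isGSymm_bx {G : Type*} [Group G] {u : G → Matrix (Fin d) (Fin d) ℂ}
    {M N : Matrix (Λ → Fin d) (Λ → Fin d) ℂ}
    (hM : IsGSymm u M) (hN : IsGSymm u N) : IsGSymm u (bx M N) := by
  intro g
  rw [symOp_double, bx_mul, bx_mul, hM g, hN g]

theorem supportedOn_bx {P Q : Set Λ} {M N : Matrix (Λ → Fin d) (Λ → Fin d) ℂ}
    (hM : SupportedOn P M) (hN : SupportedOn Q N) :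
    SupportedOn (Sum.inl '' P ∪ Sum.inr '' Q) (bx M N) := by
  constructor
  · rintro x y ⟨z, hz, hne⟩
    rw [bx_apply]
    cases z with
    | inl r =>
      have hr : r ∉ P := fun h => hz (Or.inl ⟨r, h, rfl⟩)
      rw [hM.1 _ _ ⟨r, hr, hne⟩, zero_mul]
    | inr r =>
      have hr : r ∉ Q := fun h => hz (Or.inr ⟨r, h, rfl⟩)
      rw [hN.1 _ _ ⟨r, hr, hne⟩, mul_zero]
  · intro x y x' y' hxx hyy hxy hx'y'
    rw [bx_apply, bx_apply]
    have hinl : ∀ r ∈ P, (Sum.inl r : Λ ⊕ Λ) ∈ Sum.inl '' P ∪ Sum.inr '' Q :=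
      fun r hr => Or.inl ⟨r, hr, rfl⟩
    have hinr : ∀ r ∈ Q, (Sum.inr r : Λ ⊕ Λ) ∈ Sum.inl '' P ∪ Sum.inr '' Q :=
      fun r hr => Or.inr ⟨r, hr, rfl⟩
    have hinl' : ∀ r : Λ, r ∉ P → (Sum.inl r : Λ ⊕ Λ) ∉ Sum.inl '' P ∪ Sum.inr '' Q := by
      rintro r hr (⟨s, hs, he⟩ | ⟨s, hs, he⟩)
      · cases he; exact hr hs
      · cases he
    have hinr' : ∀ r : Λ, r ∉ Q → (Sum.inr r : Λ ⊕ Λ) ∉ Sum.inl '' P ∪ Sum.inr '' Q := by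
      rintro r hr (⟨s, hs, he⟩ | ⟨s, hs, he⟩)
      · cases he
      · cases he; exact hr hs
    have e1 : M (x ∘ Sum.inl) (y ∘ Sum.inl) = M (x' ∘ Sum.inl) (y' ∘ Sum.inl) :=
      hM.2 _ _ _ _ (fun r hr => hxx _ (hinl r hr)) (fun r hr => hyy _ (hinl r hr))
        (fun r hr => hxy _ (hinl' r hr)) (fun r hr => hx'y' _ (hinl' r hr))
    have e2 : N (x ∘ Sum.inr) (y ∘ Sum.inr) = N (x' ∘ Sum.inr) (y' ∘ Sum.inr) :=
      hN.2 _ _ _ _ (fun r hr => hxx _ (hinr r hr)) (fun r hr => hyy _ (hinr r hr))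
        (fun r hr => hxy _ (hinr' r hr)) (fun r hr => hx'y' _ (hinr' r hr))
    rw [e1, e2]

end Double

section Decomp
variable [Fintype Λ] [DecidableEq Λ]

theorem single_inr_decomp (hd : 1 ≤ d) {t : Λ}
    {P : Matrix ((Λ ⊕ Λ) → Fin d) ((Λ ⊕ Λ) → Fin d) ℂ}
    (hP : SupportedOn ({Sum.inr t} : Set (Λ ⊕ Λ)) P) :
    ∃ p : Matrix (Λ → Fin d) (Λ → Fin d) ℂ, SupportedOn ({t} : Set Λ) p ∧ P = bx 1 p := by
  set x₀ : Λ → Fin d := fun _ => ⟨0, hd⟩ with hx₀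
  set j : (Λ → Fin d) → ((Λ ⊕ Λ) → Fin d) := fun a => Sum.elim x₀ a with hj
  refine ⟨Matrix.of fun a b => P (j a) (j b), ⟨?_, ?_⟩, ?_⟩
  · rintro a b ⟨s, hs, hne⟩
    have hst : s ≠ t := by simpa using hs
    apply hP.1
    refine ⟨Sum.inr s, by simp [hst], ?_⟩
    simpa [hj] using hne
  · intro a b a' b' haa hbb hab ha'b'
    apply hP.2 (j a) (j b) (j a') (j b')
    · rintro z hz
      rw [Set.mem_singleton_iff] at hz
      subst hz
      simpa [hj] using haa t rfl
    · rintro z hz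
      rw [Set.mem_singleton_iff] at hz
      subst hz
      simpa [hj] using hbb t rfl
    · intro z hz
      cases z with
      | inl s => rfl
      | inr s =>
        have hst : s ≠ t := by simpa using hz
        simpa [hj] using hab s hst
    · intro z hz
      cases z with
      | inl s => rfl
      | inr s =>
        have hst : s ≠ t := by simpa using hz
        simpa [hj] using ha'b' s hst
  · ext x y
    rw [bx_apply, Matrix.one_apply]
    by_cases h : x ∘ Sum.inl = y ∘ Sum.inl
    · rw [if_pos h, one_mul, Matrix.of_apply]
      by_cases hagree : ∀ s, s ≠ t → x (Sum.inr s) = y (Sum.inr s)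
      · apply hP.2
        · rintro z hz
          rw [Set.mem_singleton_iff] at hz
          subst hz
          rfl
        · rintro z hz
          rw [Set.mem_singleton_iff] at hz
          subst hz
          rfl
        · intro z hz
          cases z with
          | inl s => exact congrFun h s
          | inr s =>
            have hst : s ≠ t := by simpa using hz
            exact hagree s hst
        · intro z hz
          cases z with
          | inl s => rfl
          | inr s =>
            have hst : s ≠ t := by simpa using hz
            exact hagree s hst
      · push_neg at hagree
        obtain ⟨s, hst, hne⟩ := hagree
        rw [hP.1 x y ⟨Sum.inr s, by simp [hst], hne⟩,
          hP.1 (j (x ∘ Sum.inr)) (j (y ∘ Sum.inr)) ⟨Sum.inr s, by simp [hst], by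
            simpa [hj] using hne⟩]
    · rw [if_neg h, zero_mul]
      have : ∃ a, x (Sum.inl a) ≠ y (Sum.inl a) := by
        by_contra hc
        push_neg at hc
        exact h (funext hc)
      obtain ⟨a, ha⟩ := this
      exact hP.1 x y ⟨Sum.inl a, by simp, ha⟩

theorem single_inl_decomp (hd : 1 ≤ d) {t : Λ}
    {P : Matrix ((Λ ⊕ Λ) → Fin d) ((Λ ⊕ Λ) → Fin d) ℂ}
    (hP : SupportedOn ({Sum.inl t} : Set (Λ ⊕ Λ)) P) :
    ∃ p : Matrix (Λ → Fin d) (Λ → Fin d) ℂ, SupportedOn ({t} : Set Λ) p ∧ P = bx p 1 := by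
  set x₀ : Λ → Fin d := fun _ => ⟨0, hd⟩ with hx₀
  set j : (Λ → Fin d) → ((Λ ⊕ Λ) → Fin d) := fun a => Sum.elim a x₀ with hj
  refine ⟨Matrix.of fun a b => P (j a) (j b), ⟨?_, ?_⟩, ?_⟩
  · rintro a b ⟨s, hs, hne⟩
    have hst : s ≠ t := by simpa using hs
    apply hP.1
    refine ⟨Sum.inl s, by simp [hst], ?_⟩
    simpa [hj] using hne
  · intro a b a' b' haa hbb hab ha'b'
    apply hP.2 (j a) (j b) (j a') (j b')
    · rintro z hz
      rw [Set.mem_singleton_iff] at hz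
      subst hz
      simpa [hj] using haa t rfl
    · rintro z hz
      rw [Set.mem_singleton_iff] at hz
      subst hz
      simpa [hj] using hbb t rfl
    · intro z hz
      cases z with
      | inr s => rfl
      | inl s =>
        have hst : s ≠ t := by simpa using hz
        simpa [hj] using hab s hst
    · intro z hz
      cases z with
      | inr s => rfl
      | inl s =>
        have hst : s ≠ t := by simpa using hz
        simpa [hj] using ha'b' s hst
  · ext x y
    rw [bx_apply, Matrix.one_apply]
    by_cases h : x ∘ Sum.inr = y ∘ Sum.inr
    · rw [if_pos h, mul_one, Matrix.of_apply]
      by_cases hagree : ∀ s, s ≠ t → x (Sum.inl s) = y (Sum.inl s)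
      · apply hP.2
        · rintro z hz
          rw [Set.mem_singleton_iff] at hz
          subst hz
          rfl
        · rintro z hz
          rw [Set.mem_singleton_iff] at hz
          subst hz
          rfl
        · intro z hz
          cases z with
          | inr s => exact congrFun h s
          | inl s =>
            have hst : s ≠ t := by simpa using hz
            exact hagree s hst
        · intro z hz
          cases z with
          | inr s => rfl
          | inl s =>
            have hst : s ≠ t := by simpa using hz
            exact hagree s hst
      · push_neg at hagree
        obtain ⟨s, hst, hne⟩ := hagree
        rw [hP.1 x y ⟨Sum.inl s, by simp [hst], hne⟩,
          hP.1 (j (x ∘ Sum.inl)) (j (y ∘ Sum.inl)) ⟨Sum.inl s, by simp [hst], by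
            simpa [hj] using hne⟩]
    · rw [if_neg h, mul_zero]
      have : ∃ a, x (Sum.inr a) ≠ y (Sum.inr a) := by
        by_contra hc
        push_neg at hc
        exact h (funext hc)
      obtain ⟨a, ha⟩ := this
      exact hP.1 x y ⟨Sum.inr a, by simp, ha⟩

variable [MetricSpace Λ]

theorem conj_bx_right (hd : 1 ≤ d) {Wc : Matrix (Λ → Fin d) (Λ → Fin d) ℂ} {ζ : ℝ}
    (hWu : IsUnitaryMat Wc)
    (hs : ∀ (r : Λ) (p : Matrix (Λ → Fin d) (Λ → Fin d) ℂ), SupportedOn ({r} : Set Λ) p →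
      SupportedOn (Metric.closedBall r ζ) (Wc * p * Wcᴴ))
    {P Q : Set Λ} {O : Matrix ((Λ ⊕ Λ) → Fin d) ((Λ ⊕ Λ) → Fin d) ℂ}
    (hO : SupportedOn (Sum.inl '' P ∪ Sum.inr '' Q) O) :
    SupportedOn (Sum.inl '' P ∪ Sum.inr '' (grow ζ Q)) ((bx 1 Wc)ᴴ * O * (bx 1 Wc)) := by
  apply supportedOn_conj (unitary_bx unitary_one hWu) hO
  intro z hz P' hP'
  cases z with
  | inl tt =>
    have htP : tt ∉ P := fun h => hz (Or.inl ⟨tt, h, rfl⟩)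
    obtain ⟨p, hp, hPe⟩ := single_inl_decomp hd hP'
    refine ⟨{Sum.inl tt}, ?_, ?_⟩
    · ext w
      simp only [Set.mem_inter_iff, Set.mem_singleton_iff, Set.mem_empty_iff_false,
        iff_false, not_and]
      rintro rfl (⟨s, hs', he⟩ | ⟨s, hs', he⟩)
      · cases he; exact htP hs'
      · cases he
    · have he : (bx 1 Wc) * P' * (bx 1 Wc)ᴴ = bx p 1 := by
        rw [hPe, bx_conjT, Matrix.conjTranspose_one, bx_mul, bx_mul]
        simp only [Matrix.one_mul, Matrix.mul_one]
        rw [hWu.2]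
      rw [he]
      have h1 := supportedOn_bx hp (supportedOn_one (∅ : Set Λ))
      apply supportedOn_mono _ h1
      rw [Set.image_empty, Set.image_singleton, Set.union_empty]
  | inr tt =>
    have htQ : tt ∉ grow ζ Q := fun h => hz (Or.inr ⟨tt, h, rfl⟩)
    obtain ⟨p, hp, hPe⟩ := single_inr_decomp hd hP'
    refine ⟨Sum.inl '' (∅ : Set Λ) ∪ Sum.inr '' Metric.closedBall tt ζ, ?_, ?_⟩
    · apply Set.eq_empty_iff_forall_notMem.mpr
      rintro w ⟨hw1, hw2⟩
      rw [Set.image_empty, Set.empty_union] at hw1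
      obtain ⟨s, hsb, rfl⟩ := hw1
      rcases hw2 with ⟨s2, hs2, he⟩ | ⟨s2, hs2, he⟩
      · cases he
      · have hss : s2 = s := by injection he
        subst hss
        exact htQ ⟨s2, hs2, by rw [dist_comm]; exact hsb⟩
    · have he : (bx 1 Wc) * P' * (bx 1 Wc)ᴴ = bx 1 (Wc * p * Wcᴴ) := by
        rw [hPe, bx_conjT, Matrix.conjTranspose_one, bx_mul, bx_mul]
        simp only [Matrix.one_mul, Matrix.mul_one]
      rw [he]
      exact supportedOn_bx (supportedOn_one (∅ : Set Λ)) (hs tt p hp)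

theorem conj_bx_left (hd : 1 ≤ d) {Wc : Matrix (Λ → Fin d) (Λ → Fin d) ℂ} {ζ : ℝ}
    (hWu : IsUnitaryMat Wc)
    (hs : ∀ (r : Λ) (p : Matrix (Λ → Fin d) (Λ → Fin d) ℂ), SupportedOn ({r} : Set Λ) p →
      SupportedOn (Metric.closedBall r ζ) (Wc * p * Wcᴴ))
    {P Q : Set Λ} {O : Matrix ((Λ ⊕ Λ) → Fin d) ((Λ ⊕ Λ) → Fin d) ℂ}
    (hO : SupportedOn (Sum.inl '' P ∪ Sum.inr '' Q) O) :
    SupportedOn (Sum.inl '' (grow ζ P) ∪ Sum.inr '' Q) ((bx Wc 1)ᴴ * O * (bx Wc 1)) := by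
  apply supportedOn_conj (unitary_bx hWu unitary_one) hO
  intro z hz P' hP'
  cases z with
  | inr tt =>
    have htQ : tt ∉ Q := fun h => hz (Or.inr ⟨tt, h, rfl⟩)
    obtain ⟨p, hp, hPe⟩ := single_inr_decomp hd hP'
    refine ⟨{Sum.inr tt}, ?_, ?_⟩
    · ext w
      simp only [Set.mem_inter_iff, Set.mem_singleton_iff, Set.mem_empty_iff_false,
        iff_false, not_and]
      rintro rfl (⟨s, hs', he⟩ | ⟨s, hs', he⟩)
      · cases he
      · cases he; exact htQ hs'
    · have he : (bx Wc 1) * P' * (bx Wc 1)ᴴ = bx 1 p := by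
        rw [hPe, bx_conjT, Matrix.conjTranspose_one, bx_mul, bx_mul]
        simp only [Matrix.one_mul, Matrix.mul_one]
        rw [hWu.2]
      rw [he]
      have h1 := supportedOn_bx (supportedOn_one (∅ : Set Λ)) hp
      apply supportedOn_mono _ h1
      rw [Set.image_empty, Set.image_singleton, Set.empty_union]
  | inl tt =>
    have htP : tt ∉ grow ζ P := fun h => hz (Or.inl ⟨tt, h, rfl⟩)
    obtain ⟨p, hp, hPe⟩ := single_inl_decomp hd hP'
    refine ⟨Sum.inl '' Metric.closedBall tt ζ ∪ Sum.inr '' (∅ : Set Λ), ?_, ?_⟩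
    · apply Set.eq_empty_iff_forall_notMem.mpr
      rintro w ⟨hw1, hw2⟩
      rw [Set.image_empty, Set.union_empty] at hw1
      obtain ⟨s, hsb, rfl⟩ := hw1
      rcases hw2 with ⟨s2, hs2, he⟩ | ⟨s2, hs2, he⟩
      · have hss : s2 = s := by injection he
        subst hss
        exact htP ⟨s2, hs2, by rw [dist_comm]; exact hsb⟩
      · cases he
    · have he : (bx Wc 1) * P' * (bx Wc 1)ᴴ = bx (Wc * p * Wcᴴ) 1 := by
        rw [hPe, bx_conjT, Matrix.conjTranspose_one, bx_mul, bx_mul]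
        simp only [Matrix.one_mul, Matrix.mul_one]
      rw [he]
      exact supportedOn_bx (hs tt p hp) (supportedOn_one (∅ : Set Λ))

end Decomp

section Swap
variable [Fintype Λ] [DecidableEq Λ]

open Classical in
/-- The site involution swapping the two copies on `X`. -/
noncomputable def tau (X : Set Λ) : (Λ ⊕ Λ) → (Λ ⊕ Λ)
  | Sum.inl r => if r ∈ X then Sum.inr r else Sum.inl r
  | Sum.inr r => if r ∈ X then Sum.inl r else Sum.inr r

/-- The doubled copy of a set. -/
def tset (X : Set Λ) : Set (Λ ⊕ Λ) := Sum.inl '' X ∪ Sum.inr '' X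

theorem tau_invol (X : Set Λ) (z : Λ ⊕ Λ) : tau X (tau X z) = z := by
  cases z with
  | inl r => by_cases h : r ∈ X <;> simp [tau, h]
  | inr r => by_cases h : r ∈ X <;> simp [tau, h]

theorem tau_fix {X : Set Λ} {z : Λ ⊕ Λ} (hz : z ∉ tset X) : tau X z = z := by
  cases z with
  | inl r =>
    have : r ∉ X := fun h => hz (Or.inl ⟨r, h, rfl⟩)
    simp [tau, this]
  | inr r =>
    have : r ∉ X := fun h => hz (Or.inr ⟨r, h, rfl⟩)
    simp [tau, this]

theorem tau_mem {X : Set Λ} {z : Λ ⊕ Λ} (hz : z ∈ tset X) : tau X z ∈ tset X := by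
  rcases hz with ⟨r, hr, rfl⟩ | ⟨r, hr, rfl⟩
  · simp only [tau, if_pos hr]
    exact Or.inr ⟨r, hr, rfl⟩
  · simp only [tau, if_pos hr]
    exact Or.inl ⟨r, hr, rfl⟩

theorem tau_comp {X Y : Set Λ} (hdis : X ∩ Y = ∅) (z : Λ ⊕ Λ) :
    tau X (tau Y z) = tau (X ∪ Y) z := by
  have hXY : ∀ r, r ∈ Y → r ∉ X := fun r hY hX =>
    absurd (Set.mem_inter hX hY) (by rw [hdis]; exact Set.notMem_empty r)
  cases z with
  | inl r =>
    by_cases hY : r ∈ Y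
    · simp [tau, hY, hXY r hY, Set.mem_union]
    · by_cases hX : r ∈ X <;> simp [tau, hY, hX, Set.mem_union]
  | inr r =>
    by_cases hY : r ∈ Y
    · simp [tau, hY, hXY r hY, Set.mem_union]
    · by_cases hX : r ∈ X <;> simp [tau, hY, hX, Set.mem_union]

/-- The partial swap unitary. -/
noncomputable def swp (X : Set Λ) : Matrix ((Λ ⊕ Λ) → Fin d) ((Λ ⊕ Λ) → Fin d) ℂ :=
  Matrix.of fun x y => if y = x ∘ tau X then 1 else 0

theorem swp_mul_apply (X : Set Λ) (M : Matrix ((Λ ⊕ Λ) → Fin d) ((Λ ⊕ Λ) → Fin d) ℂ)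
    (x y : (Λ ⊕ Λ) → Fin d) :
    ((swp X : Matrix ((Λ ⊕ Λ) → Fin d) ((Λ ⊕ Λ) → Fin d) ℂ) * M) x y = M (x ∘ tau X) y := by
  rw [Matrix.mul_apply]
  have : ∀ z, swp X x z * M z y = if z = x ∘ tau X then M z y else 0 := by
    intro z
    rw [swp, Matrix.of_apply]
    by_cases h : z = x ∘ tau X <;> simp [h]
  rw [Finset.sum_congr rfl (fun z _ => this z)]
  rw [Finset.sum_ite_eq' Finset.univ (x ∘ tau X) (fun z => M z y)]
  simp

theorem mul_swp_apply (X : Set Λ) (M : Matrix ((Λ ⊕ Λ) → Fin d) ((Λ ⊕ Λ) → Fin d) ℂ)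
    (x y : (Λ ⊕ Λ) → Fin d) :
    (M * (swp X : Matrix ((Λ ⊕ Λ) → Fin d) ((Λ ⊕ Λ) → Fin d) ℂ)) x y = M x (y ∘ tau X) := by
  rw [Matrix.mul_apply]
  have hiff : ∀ z : (Λ ⊕ Λ) → Fin d, (y = z ∘ tau X) ↔ (z = y ∘ tau X) := by
    intro z
    constructor
    · intro h
      funext w
      have := congrFun h (tau X w)
      rw [Function.comp_apply, tau_invol] at this
      exact this.symm
    · intro h
      funext w
      have := congrFun h (tau X w)
      rw [Function.comp_apply, tau_invol] at this
      exact this.symm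
  have : ∀ z, M x z * swp X z y = if z = y ∘ tau X then M x z else 0 := by
    intro z
    rw [swp, Matrix.of_apply]
    by_cases h : z = y ∘ tau X
    · rw [if_pos ((hiff z).mpr h), if_pos h, mul_one]
    · rw [if_neg (fun hc => h ((hiff z).mp hc)), if_neg h, mul_zero]
  rw [Finset.sum_congr rfl (fun z _ => this z)]
  rw [Finset.sum_ite_eq' Finset.univ (y ∘ tau X) (fun z => M x z)]
  simp

theorem swp_conj_apply (X : Set Λ) (M : Matrix ((Λ ⊕ Λ) → Fin d) ((Λ ⊕ Λ) → Fin d) ℂ)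
    (x y : (Λ ⊕ Λ) → Fin d) :
    (((swp X : Matrix ((Λ ⊕ Λ) → Fin d) ((Λ ⊕ Λ) → Fin d) ℂ) * M) *
      (swp X : Matrix ((Λ ⊕ Λ) → Fin d) ((Λ ⊕ Λ) → Fin d) ℂ)) x y =
      M (x ∘ tau X) (y ∘ tau X) := by
  rw [mul_swp_apply, swp_mul_apply]

theorem swp_conjT (X : Set Λ) : (swp X : Matrix ((Λ ⊕ Λ) → Fin d) _ ℂ)ᴴ = swp X := by
  ext x y
  rw [Matrix.conjTranspose_apply, swp, Matrix.of_apply, Matrix.of_apply]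
  have hiff : (x = y ∘ tau X) ↔ (y = x ∘ tau X) := by
    constructor <;> intro h <;> funext w <;>
      · have := congrFun h (tau X w)
        rw [Function.comp_apply, tau_invol] at this
        exact this.symm
  by_cases h : y = x ∘ tau X
  · rw [if_pos h, if_pos (hiff.mpr h), star_one]
  · rw [if_neg h, if_neg (fun hc => h (hiff.mp hc)), star_zero]

theorem swp_mul_swp {X Y : Set Λ} (hdis : X ∩ Y = ∅) :
    (swp X : Matrix ((Λ ⊕ Λ) → Fin d) _ ℂ) * swp Y = swp (X ∪ Y) := by
  ext x y
  rw [swp_mul_apply, swp, swp, Matrix.of_apply, Matrix.of_apply]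
  have : (x ∘ tau X) ∘ tau Y = x ∘ tau (X ∪ Y) := by
    funext w
    simp only [Function.comp_apply]
    rw [tau_comp hdis]
  rw [this]

theorem swp_mul_self (X : Set Λ) :
    (swp X : Matrix ((Λ ⊕ Λ) → Fin d) _ ℂ) * swp X = 1 := by
  ext x y
  rw [swp_mul_apply, swp, Matrix.of_apply, Matrix.one_apply]
  have : (y = (x ∘ tau X) ∘ tau X) ↔ (x = y) := by
    constructor
    · intro h
      funext w
      have := congrFun h w
      simp only [Function.comp_apply, tau_invol] at this
      exact this.symm
    · intro h
      subst h
      funext w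
      simp [tau_invol]
  by_cases h : x = y
  · rw [if_pos (this.mpr h), if_pos h]
  · rw [if_neg (fun hc => h (this.mp hc)), if_neg h]

theorem unitary_swp (X : Set Λ) : IsUnitaryMat (swp X : Matrix ((Λ ⊕ Λ) → Fin d) _ ℂ) := by
  constructor <;> rw [swp_conjT, swp_mul_self]

theorem swp_supported (X : Set Λ) :
    SupportedOn (tset X) (swp X : Matrix ((Λ ⊕ Λ) → Fin d) _ ℂ) := by
  constructor
  · rintro x y ⟨z, hz, hne⟩
    rw [swp, Matrix.of_apply, if_neg]
    intro h
    apply hne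
    have := congrFun h z
    rw [Function.comp_apply, tau_fix hz] at this
    exact this.symm
  · intro x y x' y' hxx hyy hxy hx'y'
    rw [swp, Matrix.of_apply, Matrix.of_apply]
    have hiff : (y = x ∘ tau X) ↔ (y' = x' ∘ tau X) := by
      rw [funext_iff, funext_iff]
      constructor
      · intro h z
        by_cases hz : z ∈ tset X
        · rw [Function.comp_apply, ← hyy z hz, h z, Function.comp_apply]
          exact hxx (tau X z) (tau_mem hz)
        · rw [Function.comp_apply, tau_fix hz]
          exact (hx'y' z hz).symm
      · intro h z
        by_cases hz : z ∈ tset X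
        · rw [Function.comp_apply, hyy z hz, h z, Function.comp_apply]
          exact (hxx (tau X z) (tau_mem hz)).symm
        · rw [Function.comp_apply, tau_fix hz]
          exact (hxy z hz).symm
    by_cases h : y = x ∘ tau X
    · rw [if_pos h, if_pos (hiff.mp h)]
    · rw [if_neg h, if_neg (fun hc => h (hiff.mpr hc))]

theorem swp_gsymm {G : Type*} [Group G] (u : G → Matrix (Fin d) (Fin d) ℂ) (X : Set Λ) :
    IsGSymm u (swp X : Matrix ((Λ ⊕ Λ) → Fin d) _ ℂ) := by
  intro g
  ext x y
  rw [mul_swp_apply, swp_mul_apply]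
  simp only [symOp, Matrix.of_apply]
  show (∏ z, u g ((x ∘ tau X) z) (y z)) = ∏ z, u g (x z) ((y ∘ tau X) z)
  have hperm : Function.Involutive (tau X) := tau_invol X
  apply Fintype.prod_equiv (hperm.toPerm (tau X))
    (fun z => u g ((x ∘ tau X) z) (y z)) (fun w => u g (x w) ((y ∘ tau X) w))
  intro z
  simp only [Function.comp_apply, Function.Involutive.coe_toPerm, tau_invol]

theorem swp_conj_supported {X : Set Λ} {Z : Set (Λ ⊕ Λ)}
    {M : Matrix ((Λ ⊕ Λ) → Fin d) ((Λ ⊕ Λ) → Fin d) ℂ} (hM : SupportedOn Z M) :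
    SupportedOn (tau X '' Z) (swp X * M * swp X) := by
  have hmem : ∀ z : Λ ⊕ Λ, tau X z ∈ tau X '' Z ↔ z ∈ Z := by
    intro z
    constructor
    · rintro ⟨w, hw, he⟩
      have : w = z := by
        have := congrArg (tau X) he
        rwa [tau_invol, tau_invol] at this
      exact this ▸ hw
    · intro h
      exact ⟨z, h, rfl⟩
  have hmem' : ∀ z : Λ ⊕ Λ, z ∈ tau X '' Z ↔ tau X z ∈ Z := by
    intro z
    rw [← hmem (tau X z), tau_invol]
  constructor
  · rintro x y ⟨z, hz, hne⟩
    rw [swp_conj_apply]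
    apply hM.1
    refine ⟨tau X z, fun h => hz ((hmem' z).mpr h), ?_⟩
    simp only [Function.comp_apply, tau_invol]
    exact hne
  · intro x y x' y' hxx hyy hxy hx'y'
    rw [swp_conj_apply, swp_conj_apply]
    apply hM.2
    · intro w hw
      exact hxx (tau X w) ((hmem w).mpr hw)
    · intro w hw
      exact hyy (tau X w) ((hmem w).mpr hw)
    · intro w hw
      exact hxy (tau X w) (fun h => hw ((hmem w).mp h))
    · intro w hw
      exact hx'y' (tau X w) (fun h => hw ((hmem w).mp h))

theorem tau_image_subset {X P Q P' Q' : Set Λ}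
    (h1 : P \ X ⊆ P') (h2 : Q ∩ X ⊆ P') (h3 : Q \ X ⊆ Q') (h4 : P ∩ X ⊆ Q') :
    tau X '' (Sum.inl '' P ∪ Sum.inr '' Q) ⊆ Sum.inl '' P' ∪ Sum.inr '' Q' := by
  rintro w ⟨z, hz, rfl⟩
  rcases hz with ⟨r, hr, rfl⟩ | ⟨r, hr, rfl⟩
  · by_cases hX : r ∈ X
    · simp only [tau, if_pos hX]
      exact Or.inr ⟨r, h4 ⟨hr, hX⟩, rfl⟩
    · simp only [tau, if_neg hX]
      exact Or.inl ⟨r, h1 ⟨hr, hX⟩, rfl⟩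
  · by_cases hX : r ∈ X
    · simp only [tau, if_pos hX]
      exact Or.inl ⟨r, h2 ⟨hr, hX⟩, rfl⟩
    · simp only [tau, if_neg hX]
      exact Or.inr ⟨r, h3 ⟨hr, hX⟩, rfl⟩

theorem swp_bx (M N : Matrix (Λ → Fin d) (Λ → Fin d) ℂ) :
    swp Set.univ * bx M N * swp Set.univ = bx N M := by
  ext x y
  rw [swp_conj_apply, bx_apply, bx_apply]
  have h1 : (x ∘ tau Set.univ) ∘ Sum.inl = x ∘ Sum.inr := by
    funext r
    simp [tau]
  have h2 : (x ∘ tau Set.univ) ∘ Sum.inr = x ∘ Sum.inl := by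
    funext r
    simp [tau]
  have h3 : (y ∘ tau Set.univ) ∘ Sum.inl = y ∘ Sum.inr := by
    funext r
    simp [tau]
  have h4 : (y ∘ tau Set.univ) ∘ Sum.inr = y ∘ Sum.inl := by
    funext r
    simp [tau]
  rw [h1, h2, h3, h4, mul_comm]

end Swap

theorem compl_pair (B : Set Λ) :
    ((Sum.inl '' B ∪ Sum.inr '' B : Set (Λ ⊕ Λ)))ᶜ = Sum.inl '' Bᶜ ∪ Sum.inr '' Bᶜ := by
  ext z
  cases z with
  | inl r =>
    simp only [Set.mem_compl_iff, Set.mem_union, Set.mem_image]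
    constructor
    · intro h
      push_neg at h
      exact Or.inl ⟨r, fun hr => h.1 r hr rfl, rfl⟩
    · rintro (⟨s, hs, he⟩ | ⟨s, hs, he⟩)
      · cases he
        rintro (⟨s', hs', he'⟩ | ⟨s', hs', he'⟩)
        · have : s' = r := by injection he'
          exact hs (this ▸ hs')
        · cases he'
      · cases he
  | inr r =>
    simp only [Set.mem_compl_iff, Set.mem_union, Set.mem_image]
    constructor
    · intro h
      push_neg at h
      exact Or.inr ⟨r, fun hr => h.2 r hr rfl, rfl⟩
    · rintro (⟨s, hs, he⟩ | ⟨s, hs, he⟩)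
      · cases he
      · cases he
        rintro (⟨s', hs', he'⟩ | ⟨s', hs', he'⟩)
        · cases he'
        · have : s' = r := by injection he'
          exact hs (this ▸ hs')

theorem disj_pair {P1 Q1 P2 Q2 : Set Λ} (h1 : P1 ∩ P2 = ∅) (h2 : Q1 ∩ Q2 = ∅) :
    (Sum.inl '' P1 ∪ Sum.inr '' Q1 : Set (Λ ⊕ Λ)) ∩ (Sum.inl '' P2 ∪ Sum.inr '' Q2) = ∅ := by
  apply Set.eq_empty_iff_forall_notMem.mpr
  rintro z ⟨hz1, hz2⟩
  rcases hz1 with ⟨r, hr, rfl⟩ | ⟨r, hr, rfl⟩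
  · rcases hz2 with ⟨s, hs, he⟩ | ⟨s, hs, he⟩
    · have : s = r := by injection he
      subst this
      exact absurd (Set.mem_inter hr hs) (by rw [h1]; exact Set.notMem_empty s)
    · cases he
  · rcases hz2 with ⟨s, hs, he⟩ | ⟨s, hs, he⟩
    · cases he
    · have : s = r := by injection he
      subst this
      exact absurd (Set.mem_inter hr hs) (by rw [h2]; exact Set.notMem_empty s)

end FlowAux

/-- A flow: an assignment, to every finite lattice `Λ'`, subsets `A, B ⊆ Λ'` and
`G`-symmetric unitary `U` on `Λ' → Fin d`, of a real number `Ω^{Λ'}_{A,B}(U)`, satisfying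
the four defining properties of Definition 1. -/
structure LatticeFlow (d : ℕ) (G : Type) [Group G] (u : G → Matrix (Fin d) (Fin d) ℂ) where
  omega : (Λ' : Type) → [Fintype Λ'] → [DecidableEq Λ'] → Set Λ' → Set Λ' →
    Matrix (Λ' → Fin d) (Λ' → Fin d) ℂ → ℝ
  /-- (1): invariance under left multiplication by `G`-symmetric unitaries supported on
  `A` or on its complement. -/
  left_inv : ∀ (Λ' : Type) [Fintype Λ'] [DecidableEq Λ'] (A B : Set Λ')
    (U V : Matrix (Λ' → Fin d) (Λ' → Fin d) ℂ),
    IsUnitaryMat U → IsGSymm u U → IsUnitaryMat V → IsGSymm u V →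
    (SupportedOn A V ∨ SupportedOn Aᶜ V) →
    omega Λ' A B (V * U) = omega Λ' A B U
  /-- (2): invariance under right multiplication by `G`-symmetric unitaries supported on
  `B` or on its complement. -/
  right_inv : ∀ (Λ' : Type) [Fintype Λ'] [DecidableEq Λ'] (A B : Set Λ')
    (U V : Matrix (Λ' → Fin d) (Λ' → Fin d) ℂ),
    IsUnitaryMat U → IsGSymm u U → IsUnitaryMat V → IsGSymm u V →
    (SupportedOn B V ∨ SupportedOn Bᶜ V) →
    omega Λ' A B (U * V) = omega Λ' A B U
  /-- (3): additivity under stacking (disjoint-union lattices and Kronecker products). -/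
  stacking : ∀ (Λ₁ Λ₂ : Type) [Fintype Λ₁] [DecidableEq Λ₁] [Fintype Λ₂] [DecidableEq Λ₂]
    (A₁ B₁ : Set Λ₁) (A₂ B₂ : Set Λ₂)
    (U₁ : Matrix (Λ₁ → Fin d) (Λ₁ → Fin d) ℂ) (U₂ : Matrix (Λ₂ → Fin d) (Λ₂ → Fin d) ℂ),
    IsUnitaryMat U₁ → IsGSymm u U₁ → IsUnitaryMat U₂ → IsGSymm u U₂ →
    omega (Λ₁ ⊕ Λ₂) (Sum.inl '' A₁ ∪ Sum.inr '' A₂) (Sum.inl '' B₁ ∪ Sum.inr '' B₂)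
      (Matrix.reindex (Equiv.sumArrowEquivProdArrow Λ₁ Λ₂ (Fin d)).symm
        (Equiv.sumArrowEquivProdArrow Λ₁ Λ₂ (Fin d)).symm
        (Matrix.kroneckerMap (· * ·) U₁ U₂)) =
      omega Λ₁ A₁ B₁ U₁ + omega Λ₂ A₂ B₂ U₂
  /-- (4): normalization `Ω_{A,B}(𝟙) = 0`. -/
  norm_one : ∀ (Λ' : Type) [Fintype Λ'] [DecidableEq Λ'] (A B : Set Λ'),
    omega Λ' A B 1 = 0

/-- Corollary 4 (additivity under composition): if `(∂_{4ξ}A) ∩ (∂_{5ξ}B) = ∅`, then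
`Ω_{A,B}(U₁·U₂) = Ω_{A,B}(U₁) + Ω_{A,B}(U₂)` for `G`-symmetric strict LPUs `U₁, U₂`
with operator spreading length `ξ`. -/
theorem flow_composition
    {d : ℕ} (hd : 1 ≤ d) {G : Type} [Group G]
    (u : G → Matrix (Fin d) (Fin d) ℂ)
    (hu_unit : ∀ g, IsUnitaryMat (u g))
    (hu_mul : ∀ g h, u (g * h) = u g * u h)
    (Φ : LatticeFlow d G u)
    (Λ : Type) [Fintype Λ] [DecidableEq Λ] [MetricSpace Λ]
    (ξ : ℝ) (hξ : 0 ≤ ξ)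
    (U₁ U₂ : Matrix (Λ → Fin d) (Λ → Fin d) ℂ)
    (hU₁ : IsStrictLPU ξ U₁) (hU₁G : IsGSymm u U₁)
    (hU₂ : IsStrictLPU ξ U₂) (hU₂G : IsGSymm u U₂)
    (A B : Set Λ)
    (hsep : thickBd (4 * ξ) A ∩ thickBd (5 * ξ) B = ∅) :
    Φ.omega Λ A B (U₁ * U₂) = Φ.omega Λ A B U₁ + Φ.omega Λ A B U₂ := by
  classical
  -- unitarity and symmetry of the basic players
  have hU1u := hU₁.1
  have hU2u := hU₂.1
  have hU12u : IsUnitaryMat (U₁ * U₂) := FlowAux.unitary_mul hU1u hU2u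
  have hU12G : IsGSymm u (U₁ * U₂) := FlowAux.isGSymm_mul hU₁G hU₂G
  -- regions
  set C : Set Λ := thickBd (2*ξ) B with hC_def
  set I : Set Λ := B \ C with hI_def
  set F : Set Λ := Bᶜ \ C with hF_def
  set D : Set Λ := {r : Λ | ¬ ∃ a ∈ Aᶜ, dist r a ≤ 4*ξ} with hD_def
  set E : Set Λ := {r : Λ | ¬ ∃ a ∈ A, dist r a ≤ 4*ξ} with hE_def
  set CD : Set Λ := C ∩ D with hCD_def
  set CE : Set Λ := C \ D with hCE_def
  -- geometry
  have hIB : I ⊆ B := fun r hr => hr.1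
  have hFB : F ⊆ Bᶜ := fun r hr => hr.1
  have hgI : FlowAux.grow ξ I ⊆ B := by
    rintro x ⟨i, hi, hdist⟩
    obtain ⟨hiB, hiC⟩ := hi
    by_contra hxB
    apply hiC
    exact ⟨⟨i, hiB, by simp only [dist_self]; linarith⟩,
      ⟨x, hxB, by rw [dist_comm]; linarith⟩⟩
  have hgF : FlowAux.grow ξ F ⊆ Bᶜ := by
    rintro x ⟨i, hi, hdist⟩
    obtain ⟨hiB, hiC⟩ := hi
    intro hxB
    apply hiC
    exact ⟨⟨x, hxB, by rw [dist_comm]; linarith⟩,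
      ⟨i, hiB, by simp only [dist_self]; linarith⟩⟩
  have hCE_E : CE ⊆ E := by
    rintro r ⟨hrC, hrD⟩
    simp only [hE_def, Set.mem_setOf_eq]
    intro hA
    have hD' : ∃ a ∈ Aᶜ, dist r a ≤ 4*ξ := by
      by_contra hcon
      exact hrD hcon
    obtain ⟨h1, h2⟩ := hrC
    have hrbd : r ∈ thickBd (4*ξ) A ∩ thickBd (5*ξ) B := by
      constructor
      · exact ⟨hA, hD'⟩
      · obtain ⟨s1, hs1, hd1⟩ := h1
        obtain ⟨s2, hs2, hd2⟩ := h2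
        exact ⟨⟨s1, hs1, by linarith⟩, ⟨s2, hs2, by linarith⟩⟩
    rw [hsep] at hrbd
    exact absurd hrbd (Set.notMem_empty r)
  have hD_A : D ⊆ A := by
    intro r hr
    simp only [hD_def, Set.mem_setOf_eq] at hr
    by_contra hrA
    exact hr ⟨r, hrA, by simp only [dist_self]; linarith⟩
  have hgrowCD : ∀ t : ℝ, t ≤ 4*ξ → FlowAux.grow t CD ⊆ A := by
    intro t ht
    rintro x ⟨c, hc, hdist⟩
    obtain ⟨hcC, hcD⟩ := hc
    simp only [hD_def, Set.mem_setOf_eq] at hcD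
    by_contra hxA
    exact hcD ⟨x, hxA, by rw [dist_comm]; linarith⟩
  have hgrowCE : ∀ t : ℝ, t ≤ 4*ξ → FlowAux.grow t CE ⊆ Aᶜ := by
    intro t ht
    rintro x ⟨c, hc, hdist⟩
    have hcE := hCE_E hc
    simp only [hE_def, Set.mem_setOf_eq] at hcE
    intro hxA
    exact hcE ⟨x, hxA, by rw [dist_comm]; linarith⟩
  have hCD_A : CD ⊆ A := fun r hr => hD_A hr.2
  have hCE_A : CE ⊆ Aᶜ := by
    intro r hr
    have hrE := hCE_E hr
    simp only [hE_def, Set.mem_setOf_eq] at hrE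
    intro hrA
    exact hrE ⟨r, hrA, by simp only [dist_self]; linarith⟩
  have hdisC_IF : C ∩ (I ∪ F) = ∅ := by
    apply Set.eq_empty_iff_forall_notMem.mpr
    rintro r ⟨hrC, hrIF⟩
    rcases hrIF with hrI | hrF
    · exact hrI.2 hrC
    · exact hrF.2 hrC
  have hdisI_F : I ∩ F = ∅ := by
    apply Set.eq_empty_iff_forall_notMem.mpr
    rintro r ⟨hrI, hrF⟩
    exact hrF.1 hrI.1
  have huniv : C ∪ (I ∪ F) = (Set.univ : Set Λ) := by
    ext r
    simp only [Set.mem_union, Set.mem_univ, iff_true]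
    by_cases hrC : r ∈ C
    · exact Or.inl hrC
    · by_cases hrB : r ∈ B
      · exact Or.inr (Or.inl ⟨hrB, hrC⟩)
      · exact Or.inr (Or.inr ⟨hrB, hrC⟩)
  have hCDE : CD ∪ CE = C := Set.inter_union_diff C D
  have hdisCD_CE : CD ∩ CE = ∅ := by
    apply Set.eq_empty_iff_forall_notMem.mpr
    rintro r ⟨hr1, hr2⟩
    exact hr2.2 hr1.2
  have hdisI_gF : I ∩ FlowAux.grow ξ F = ∅ := by
    apply Set.eq_empty_iff_forall_notMem.mpr
    rintro r ⟨hrI, hrg⟩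
    exact (hgF hrg) hrI.1
  have hdisCD_gCE : CD ∩ FlowAux.grow ξ CE = ∅ := by
    apply Set.eq_empty_iff_forall_notMem.mpr
    rintro r ⟨hrCD, hrg⟩
    exact (hgrowCE ξ (by linarith) hrg) (hD_A hrCD.2)
  -- matrices on the doubled lattice
  set T : Matrix ((Λ ⊕ Λ) → Fin d) ((Λ ⊕ Λ) → Fin d) ℂ := FlowAux.bx 1 U₂ with hT_def
  have hTu : IsUnitaryMat T := FlowAux.unitary_bx FlowAux.unitary_one hU2u
  have hTG : IsGSymm u T := FlowAux.isGSymm_bx FlowAux.isGSymm_one hU₂G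
  set Psi : Set Λ → Matrix ((Λ ⊕ Λ) → Fin d) ((Λ ⊕ Λ) → Fin d) ℂ :=
    fun X => T * FlowAux.swp X * Tᴴ * FlowAux.swp X with hPsi_def
  have hPsiu : ∀ X : Set Λ, IsUnitaryMat (Psi X) := fun X =>
    FlowAux.unitary_mul (FlowAux.unitary_mul (FlowAux.unitary_mul hTu
      (FlowAux.unitary_swp X)) (FlowAux.unitary_conjT hTu)) (FlowAux.unitary_swp X)
  have hPsiG : ∀ X : Set Λ, IsGSymm u (Psi X) := fun X =>
    FlowAux.isGSymm_mul (FlowAux.isGSymm_mul (FlowAux.isGSymm_mul hTG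
      (FlowAux.swp_gsymm u X)) (FlowAux.isGSymm_conjT hu_unit hu_mul hTG))
      (FlowAux.swp_gsymm u X)
  have hPsiSupp : ∀ X : Set Λ,
      SupportedOn (Sum.inl '' X ∪ Sum.inr '' (FlowAux.grow ξ X)) (Psi X) := by
    intro X
    have hs : ∀ (r : Λ) (p : Matrix (Λ → Fin d) (Λ → Fin d) ℂ),
        SupportedOn ({r} : Set Λ) p →
        SupportedOn (Metric.closedBall r ξ) (U₂ᴴ * p * (U₂ᴴ)ᴴ) := by
      intro r p hp
      rw [Matrix.conjTranspose_conjTranspose]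
      exact hU₂.2 r p hp
    have h1 : SupportedOn (Sum.inl '' X ∪ Sum.inr '' (FlowAux.grow ξ X))
        ((FlowAux.bx 1 U₂ᴴ)ᴴ * FlowAux.swp X * FlowAux.bx 1 U₂ᴴ) :=
      FlowAux.conj_bx_right hd (FlowAux.unitary_conjT hU2u) hs
        (show SupportedOn (Sum.inl '' X ∪ Sum.inr '' X) (FlowAux.swp X) from
          FlowAux.swp_supported X)
    have h2 : T * FlowAux.swp X * Tᴴ
        = (FlowAux.bx 1 U₂ᴴ)ᴴ * FlowAux.swp X * FlowAux.bx 1 U₂ᴴ := by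
      simp only [hT_def, FlowAux.bx_conjT, Matrix.conjTranspose_one,
        Matrix.conjTranspose_conjTranspose]
    have h3 : SupportedOn (Sum.inl '' X ∪ Sum.inr '' (FlowAux.grow ξ X))
        (T * FlowAux.swp X * Tᴴ) := by
      rw [h2]; exact h1
    have h4 : SupportedOn (Sum.inl '' X ∪ Sum.inr '' (FlowAux.grow ξ X))
        (FlowAux.swp X : Matrix ((Λ ⊕ Λ) → Fin d) ((Λ ⊕ Λ) → Fin d) ℂ) := by
      apply FlowAux.supportedOn_mono _ (FlowAux.swp_supported X)
      rintro z (⟨r, hr, rfl⟩ | ⟨r, hr, rfl⟩)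
      · exact Or.inl ⟨r, hr, rfl⟩
      · exact Or.inr ⟨r, FlowAux.subset_grow hξ X hr, rfl⟩
    show SupportedOn _ (T * FlowAux.swp X * Tᴴ * FlowAux.swp X)
    exact FlowAux.supportedOn_mul h3 h4
  -- algebraic identities for Psi
  have hswpcomm : ∀ X Y : Set Λ, X ∩ Y = ∅ →
      (FlowAux.swp X : Matrix ((Λ ⊕ Λ) → Fin d) ((Λ ⊕ Λ) → Fin d) ℂ) * FlowAux.swp Y
        = FlowAux.swp Y * FlowAux.swp X := by
    intro X Y hdis
    rw [FlowAux.swp_mul_swp hdis, Set.union_comm,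
      ← FlowAux.swp_mul_swp (by rw [Set.inter_comm]; exact hdis)]
  have hSS : ∀ (X : Set Λ) (Z : Matrix ((Λ ⊕ Λ) → Fin d) ((Λ ⊕ Λ) → Fin d) ℂ),
      FlowAux.swp X * (FlowAux.swp X * Z) = Z := by
    intro X Z
    rw [← Matrix.mul_assoc, FlowAux.swp_mul_self, Matrix.one_mul]
  have hTTc : ∀ Z : Matrix ((Λ ⊕ Λ) → Fin d) ((Λ ⊕ Λ) → Fin d) ℂ, Tᴴ * (T * Z) = Z := by
    intro Z
    rw [← Matrix.mul_assoc, hTu.1, Matrix.one_mul]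
  have psi_union : ∀ X Y : Set Λ, X ∩ Y = ∅ →
      Psi (X ∪ Y) = Psi X * (FlowAux.swp X * Psi Y * FlowAux.swp X) := by
    intro X Y hdis
    have e1 : (FlowAux.swp (X ∪ Y) : Matrix ((Λ ⊕ Λ) → Fin d) ((Λ ⊕ Λ) → Fin d) ℂ)
        = FlowAux.swp X * FlowAux.swp Y := (FlowAux.swp_mul_swp hdis).symm
    simp only [hPsi_def]
    rw [e1]
    simp only [Matrix.mul_assoc]
    rw [hSS, hTTc, hswpcomm X Y hdis]
  have hPsiUniv : Psi Set.univ = FlowAux.bx U₂ᴴ U₂ := by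
    simp only [hPsi_def]
    have e1 : T * FlowAux.swp Set.univ * Tᴴ * FlowAux.swp Set.univ
        = T * (FlowAux.swp Set.univ * Tᴴ * FlowAux.swp Set.univ) := by
      simp only [Matrix.mul_assoc]
    have e2 : (T : Matrix ((Λ ⊕ Λ) → Fin d) ((Λ ⊕ Λ) → Fin d) ℂ)ᴴ
        = FlowAux.bx 1 U₂ᴴ := by
      simp only [hT_def, FlowAux.bx_conjT, Matrix.conjTranspose_one]
    rw [e1, e2, FlowAux.swp_bx]
    simp only [hT_def]
    rw [FlowAux.bx_mul, Matrix.one_mul, Matrix.mul_one]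
  -- splitting
  have hsplit2 : Psi (I ∪ F) = Psi I * Psi F := by
    rw [psi_union I F hdisI_F]
    have hcomm : FlowAux.swp I * Psi F = Psi F * FlowAux.swp I :=
      FlowAux.commute_of_disjoint
        (FlowAux.disj_pair hdisI_F hdisI_gF)
        (show SupportedOn (Sum.inl '' I ∪ Sum.inr '' I) (FlowAux.swp I) from
          FlowAux.swp_supported I)
        (hPsiSupp F)
    rw [hcomm, Matrix.mul_assoc (Psi F), FlowAux.swp_mul_self, Matrix.mul_one]
  have hsplit3 : Psi C = Psi CD * Psi CE := by
    rw [← hCDE, psi_union CD CE hdisCD_CE]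
    have hcomm : FlowAux.swp CD * Psi CE = Psi CE * FlowAux.swp CD :=
      FlowAux.commute_of_disjoint
        (FlowAux.disj_pair hdisCD_CE hdisCD_gCE)
        (show SupportedOn (Sum.inl '' CD ∪ Sum.inr '' CD) (FlowAux.swp CD) from
          FlowAux.swp_supported CD)
        (hPsiSupp CE)
    rw [hcomm, Matrix.mul_assoc (Psi CE), FlowAux.swp_mul_self, Matrix.mul_one]
  set F1 : Matrix ((Λ ⊕ Λ) → Fin d) ((Λ ⊕ Λ) → Fin d) ℂ :=
    FlowAux.swp C * Psi I * FlowAux.swp C with hF1_def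
  set F2 : Matrix ((Λ ⊕ Λ) → Fin d) ((Λ ⊕ Λ) → Fin d) ℂ :=
    FlowAux.swp C * Psi F * FlowAux.swp C with hF2_def
  have hV : Psi Set.univ = Psi CD * (Psi CE * (F1 * F2)) := by
    have eF : FlowAux.swp C * (Psi I * Psi F) * FlowAux.swp C = F1 * F2 := by
      simp only [hF1_def, hF2_def, Matrix.mul_assoc]
      rw [hSS]
    calc Psi Set.univ = Psi (C ∪ (I ∪ F)) := by rw [huniv]
      _ = Psi C * (FlowAux.swp C * Psi (I ∪ F) * FlowAux.swp C) :=
          psi_union _ _ hdisC_IF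
      _ = (Psi CD * Psi CE) * (F1 * F2) := by rw [hsplit3, hsplit2, eF]
      _ = Psi CD * (Psi CE * (F1 * F2)) := by rw [Matrix.mul_assoc]
  -- supports of the four factors
  have hsF1 : SupportedOn (Sum.inl '' B ∪ Sum.inr '' B) F1 := by
    apply FlowAux.supportedOn_mono _ (FlowAux.swp_conj_supported (hPsiSupp I))
    apply FlowAux.tau_image_subset
    · exact fun r hr => hIB hr.1
    · exact fun r hr => hgI hr.1
    · exact fun r hr => hgI hr.1
    · exact fun r hr => hIB hr.1
  have hsF2 : SupportedOn (Sum.inl '' Bᶜ ∪ Sum.inr '' Bᶜ) F2 := by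
    apply FlowAux.supportedOn_mono _ (FlowAux.swp_conj_supported (hPsiSupp F))
    apply FlowAux.tau_image_subset
    · exact fun r hr => hFB hr.1
    · exact fun r hr => hgF hr.1
    · exact fun r hr => hgF hr.1
    · exact fun r hr => hFB hr.1
  -- the MD factor and conjugated corrections
  set MD : Matrix ((Λ ⊕ Λ) → Fin d) ((Λ ⊕ Λ) → Fin d) ℂ :=
    FlowAux.bx (U₁ * U₂) 1 with hMD_def
  have hMDu : IsUnitaryMat MD := FlowAux.unitary_bx hU12u FlowAux.unitary_one
  have hMDG : IsGSymm u MD := FlowAux.isGSymm_bx hU12G FlowAux.isGSymm_one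
  have hMDc : ∀ Z : Matrix ((Λ ⊕ Λ) → Fin d) ((Λ ⊕ Λ) → Fin d) ℂ,
      MDᴴ * (MD * Z) = Z := by
    intro Z
    rw [← Matrix.mul_assoc, hMDu.1, Matrix.one_mul]
  set RD : Matrix ((Λ ⊕ Λ) → Fin d) ((Λ ⊕ Λ) → Fin d) ℂ := MD * Psi CD * MDᴴ with hRD_def
  set RE : Matrix ((Λ ⊕ Λ) → Fin d) ((Λ ⊕ Λ) → Fin d) ℂ := MD * Psi CE * MDᴴ with hRE_def
  have hRDu : IsUnitaryMat RD := FlowAux.unitary_conj hMDu (hPsiu CD)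
  have hREu : IsUnitaryMat RE := FlowAux.unitary_conj hMDu (hPsiu CE)
  have hRDG : IsGSymm u RD :=
    FlowAux.isGSymm_mul (FlowAux.isGSymm_mul hMDG (hPsiG CD))
      (FlowAux.isGSymm_conjT hu_unit hu_mul hMDG)
  have hREG : IsGSymm u RE :=
    FlowAux.isGSymm_mul (FlowAux.isGSymm_mul hMDG (hPsiG CE))
      (FlowAux.isGSymm_conjT hu_unit hu_mul hMDG)
  have hs2 : ∀ (r : Λ) (p : Matrix (Λ → Fin d) (Λ → Fin d) ℂ),
      SupportedOn ({r} : Set Λ) p →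
      SupportedOn (Metric.closedBall r (ξ + ξ)) ((U₁*U₂)ᴴ * p * ((U₁*U₂)ᴴ)ᴴ) := by
    intro r p hp
    have h1 := hU₁.2 r p hp
    have h2 := FlowAux.lpu_conj_set hU₂ h1
    have h3 : FlowAux.grow ξ (Metric.closedBall r ξ) ⊆ Metric.closedBall r (ξ + ξ) := by
      rintro x ⟨s, hs, hdx⟩
      rw [Metric.mem_closedBall] at hs ⊢
      calc dist x r ≤ dist x s + dist s r := dist_triangle x s r
        _ ≤ ξ + ξ := by linarith
    have h4 := FlowAux.supportedOn_mono h3 h2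
    have e : (U₁*U₂)ᴴ * p * ((U₁*U₂)ᴴ)ᴴ = U₂ᴴ * (U₁ᴴ * p * U₁) * U₂ := by
      simp only [Matrix.conjTranspose_mul, Matrix.conjTranspose_conjTranspose,
        Matrix.mul_assoc]
    rw [e]
    exact h4
  have hsRD : SupportedOn (Sum.inl '' A ∪ Sum.inr '' A) RD := by
    have h5 := FlowAux.conj_bx_left hd (FlowAux.unitary_conjT hU12u) hs2 (hPsiSupp CD)
    have e6 : (FlowAux.bx ((U₁*U₂)ᴴ) 1)ᴴ * Psi CD * FlowAux.bx ((U₁*U₂)ᴴ) 1 = RD := by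
      simp only [hRD_def, hMD_def, FlowAux.bx_conjT, Matrix.conjTranspose_one,
        Matrix.conjTranspose_conjTranspose]
    rw [← e6]
    apply FlowAux.supportedOn_mono _ h5
    rintro z (⟨r, hr, rfl⟩ | ⟨r, hr, rfl⟩)
    · exact Or.inl ⟨r, hgrowCD (ξ + ξ) (by linarith) hr, rfl⟩
    · exact Or.inr ⟨r, hgrowCD ξ (by linarith) hr, rfl⟩
  have hsRE : SupportedOn ((Sum.inl '' A ∪ Sum.inr '' A : Set (Λ ⊕ Λ)))ᶜ RE := by
    rw [FlowAux.compl_pair]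
    have h5 := FlowAux.conj_bx_left hd (FlowAux.unitary_conjT hU12u) hs2 (hPsiSupp CE)
    have e6 : (FlowAux.bx ((U₁*U₂)ᴴ) 1)ᴴ * Psi CE * FlowAux.bx ((U₁*U₂)ᴴ) 1 = RE := by
      simp only [hRE_def, hMD_def, FlowAux.bx_conjT, Matrix.conjTranspose_one,
        Matrix.conjTranspose_conjTranspose]
    rw [← e6]
    apply FlowAux.supportedOn_mono _ h5
    rintro z (⟨r, hr, rfl⟩ | ⟨r, hr, rfl⟩)
    · exact Or.inl ⟨r, hgrowCE (ξ + ξ) (by linarith) hr, rfl⟩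
    · exact Or.inr ⟨r, hgrowCE ξ (by linarith) hr, rfl⟩
  -- the key matrix identity
  have hMDV : MD * FlowAux.bx U₂ᴴ U₂ = FlowAux.bx U₁ U₂ := by
    simp only [hMD_def]
    rw [FlowAux.bx_mul, Matrix.one_mul, Matrix.mul_assoc, hU2u.2, Matrix.mul_one]
  have hKey : FlowAux.bx U₁ U₂ = RD * (RE * ((MD * F1) * F2)) := by
    have l1 : FlowAux.bx U₁ U₂ = MD * (Psi CD * (Psi CE * (F1 * F2))) := by
      rw [← hMDV, ← hPsiUniv, hV]
    rw [l1]
    simp only [hRD_def, hRE_def, Matrix.mul_assoc]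
    rw [hMDc, hMDc]
  -- unitarity and symmetry of the remaining factors
  have hF1u : IsUnitaryMat F1 := by
    rw [hF1_def]
    exact FlowAux.unitary_mul (FlowAux.unitary_mul (FlowAux.unitary_swp C) (hPsiu I))
      (FlowAux.unitary_swp C)
  have hF2u : IsUnitaryMat F2 := by
    rw [hF2_def]
    exact FlowAux.unitary_mul (FlowAux.unitary_mul (FlowAux.unitary_swp C) (hPsiu F))
      (FlowAux.unitary_swp C)
  have hF1G : IsGSymm u F1 := by
    rw [hF1_def]
    exact FlowAux.isGSymm_mul (FlowAux.isGSymm_mul (FlowAux.swp_gsymm u C) (hPsiG I))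
      (FlowAux.swp_gsymm u C)
  have hF2G : IsGSymm u F2 := by
    rw [hF2_def]
    exact FlowAux.isGSymm_mul (FlowAux.isGSymm_mul (FlowAux.swp_gsymm u C) (hPsiG F))
      (FlowAux.swp_gsymm u C)
  have hX2u : IsUnitaryMat ((MD * F1) * F2) :=
    FlowAux.unitary_mul (FlowAux.unitary_mul hMDu hF1u) hF2u
  have hX2G : IsGSymm u ((MD * F1) * F2) :=
    FlowAux.isGSymm_mul (FlowAux.isGSymm_mul hMDG hF1G) hF2G
  have hX1u : IsUnitaryMat (RE * ((MD * F1) * F2)) := FlowAux.unitary_mul hREu hX2u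
  have hX1G : IsGSymm u (RE * ((MD * F1) * F2)) := FlowAux.isGSymm_mul hREG hX2G
  -- omega computations
  have hsF2' : SupportedOn ((Sum.inl '' B ∪ Sum.inr '' B : Set (Λ ⊕ Λ)))ᶜ F2 := by
    rw [FlowAux.compl_pair]
    exact hsF2
  have step1 := Φ.left_inv (Λ ⊕ Λ) (Sum.inl '' A ∪ Sum.inr '' A)
    (Sum.inl '' B ∪ Sum.inr '' B) (RE * ((MD * F1) * F2)) RD hX1u hX1G hRDu hRDG
    (Or.inl hsRD)
  have step2 := Φ.left_inv (Λ ⊕ Λ) (Sum.inl '' A ∪ Sum.inr '' A)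
    (Sum.inl '' B ∪ Sum.inr '' B) ((MD * F1) * F2) RE hX2u hX2G hREu hREG
    (Or.inr hsRE)
  have step3 := Φ.right_inv (Λ ⊕ Λ) (Sum.inl '' A ∪ Sum.inr '' A)
    (Sum.inl '' B ∪ Sum.inr '' B) (MD * F1) F2
    (FlowAux.unitary_mul hMDu hF1u) (FlowAux.isGSymm_mul hMDG hF1G) hF2u hF2G
    (Or.inr hsF2')
  have step4 := Φ.right_inv (Λ ⊕ Λ) (Sum.inl '' A ∪ Sum.inr '' A)
    (Sum.inl '' B ∪ Sum.inr '' B) MD F1 hMDu hMDG hF1u hF1G (Or.inl hsF1)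
  have stack1 : Φ.omega (Λ ⊕ Λ) (Sum.inl '' A ∪ Sum.inr '' A)
      (Sum.inl '' B ∪ Sum.inr '' B) (FlowAux.bx U₁ U₂)
      = Φ.omega Λ A B U₁ + Φ.omega Λ A B U₂ :=
    Φ.stacking Λ Λ A B A B U₁ U₂ hU1u hU₁G hU2u hU₂G
  have stack2 : Φ.omega (Λ ⊕ Λ) (Sum.inl '' A ∪ Sum.inr '' A)
      (Sum.inl '' B ∪ Sum.inr '' B) MD
      = Φ.omega Λ A B (U₁ * U₂) + Φ.omega Λ A B 1 :=
    Φ.stacking Λ Λ A B A B (U₁ * U₂) 1 hU12u hU12G FlowAux.unitary_one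
      FlowAux.isGSymm_one
  have chain : Φ.omega (Λ ⊕ Λ) (Sum.inl '' A ∪ Sum.inr '' A)
      (Sum.inl '' B ∪ Sum.inr '' B) (FlowAux.bx U₁ U₂)
      = Φ.omega (Λ ⊕ Λ) (Sum.inl '' A ∪ Sum.inr '' A)
        (Sum.inl '' B ∪ Sum.inr '' B) MD := by
    rw [hKey, step1, step2, step3, step4]
  have hnorm := Φ.norm_one Λ A B
  rw [chain, stack2, hnorm] at stack1
  linarith
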